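/- arXiv:1302.2018 — 6 statements merged into one kernel-verified Lean document; each statement's English description precedes it below -/
import Mathlib

section
/- Let p ≥ 1 be an integer, λ ∈ [0,1], and let F be a polyharmonic mapping of class HS_p(λ) on the unit disk 𝔻. Then F is univalent (injective) on 𝔻 and sense-preserving on 𝔻, i.e., viewing F as a map from 𝔻 ⊂ ℝ² to ℝ², the determinant of its real Fréchet derivative is positive at every point of 𝔻. -/
open Complex Metric Set

/-- The polyharmonic mapping associated to coefficients `a b : ℕ → ℕ → ℂ`
(`a n k` is the coefficient `a_{n,k}`):
`F(z) = Σ_{k=1}^p |z|^{2(k-1)} Σ_{n=1}^∞ (a_{n,k} z^n + conj(b_{n,k}) conj(z)^n)`. -/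
noncomputable def polyF (p : ℕ) (a b : ℕ → ℕ → ℂ) (z : ℂ) : ℂ :=
  ∑ k ∈ Finset.Icc 1 p, ((‖z‖ : ℂ)) ^ (2 * (k - 1)) *
    ∑' n : ℕ, if 1 ≤ n then
      a n k * z ^ n + (starRingEnd ℂ) (b n k) * ((starRingEnd ℂ) z) ^ n else 0

/-- The coefficient conditions defining the class `HS_p(λ)`. -/
def HSLam (p : ℕ) (lam : ℝ) (a b : ℕ → ℕ → ℂ) : Prop :=
  a 1 1 = 1 ∧
  (∀ k ∈ Finset.Icc 1 p,
    Summable (fun n : ℕ => ‖a n k‖ + ‖b n k‖)) ∧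
  (∀ k ∈ Finset.Icc 1 p, Summable (fun n : ℕ =>
    if 2 ≤ n then (2 * ((k : ℝ) - 1) + n * (lam * n + 1 - lam)) *
      (‖a n k‖ + ‖b n k‖) else 0)) ∧
  (∑ k ∈ Finset.Icc 1 p, ∑' n : ℕ,
      (if 2 ≤ n then (2 * ((k : ℝ) - 1) + n * (lam * n + 1 - lam)) *
        (‖a n k‖ + ‖b n k‖) else 0))
    ≤ 2 - ∑ k ∈ Finset.Icc 1 p,
        (2 * (k : ℝ) - 1) * (‖a 1 k‖ + ‖b 1 k‖) ∧
  1 ≤ ∑ k ∈ Finset.Icc 1 p,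
        (2 * (k : ℝ) - 1) * (‖a 1 k‖ + ‖b 1 k‖) ∧
  ∑ k ∈ Finset.Icc 1 p,
        (2 * (k : ℝ) - 1) * (‖a 1 k‖ + ‖b 1 k‖) < 2

noncomputable section

def cidL : ℂ →L[ℝ] ℂ := ContinuousLinearMap.id ℝ ℂ
def conjL : ℂ →L[ℝ] ℂ := Complex.conjCLE.toContinuousLinearMap

@[simp] lemma cidL_apply (z : ℂ) : cidL z = z := rfl
@[simp] lemma conjL_apply (z : ℂ) : conjL z = (starRingEnd ℂ) z := rfl

lemma norm_cidL_le : ‖cidL‖ ≤ 1 := ContinuousLinearMap.norm_id_le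
lemma norm_conjL_le : ‖conjL‖ ≤ 1 := by
  apply ContinuousLinearMap.opNorm_le_bound _ zero_le_one
  intro x; simp

def Pc (m j : ℕ) (z : ℂ) : ℂ := m * z ^ (m - 1) * ((starRingEnd ℂ) z) ^ j
def Qc (m j : ℕ) (z : ℂ) : ℂ := j * z ^ m * ((starRingEnd ℂ) z) ^ (j - 1)

lemma Pc_abs (m j : ℕ) (z : ℂ) :
    ‖Pc m j z‖ = m * ‖z‖ ^ (m - 1 + j) := by
  simp [Pc, map_mul, map_pow, pow_add, mul_assoc]

lemma Qc_abs (m j : ℕ) (z : ℂ) :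
    ‖Qc m j z‖ = j * ‖z‖ ^ (m + (j - 1)) := by
  simp [Qc, map_mul, map_pow, pow_add, mul_assoc]

lemma PQ_le (m j : ℕ) {z : ℂ} (hz : ‖z‖ ≤ 1) :
    ‖Pc m j z‖ + ‖Qc m j z‖ ≤ (m : ℝ) + j := by
  have h0 : (0:ℝ) ≤ ‖z‖ := norm_nonneg z
  have h1 : ∀ e : ℕ, ‖z‖ ^ e ≤ 1 := fun e => pow_le_one₀ h0 hz
  rw [Pc_abs, Qc_abs]
  have := h1 (m - 1 + j); have := h1 (m + (j - 1))
  nlinarith [Nat.cast_nonneg (α := ℝ) m, Nat.cast_nonneg (α := ℝ) j]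

lemma PQ_le' (m j : ℕ) {z : ℂ} (hz : ‖z‖ ≤ 1) (h2 : 2 ≤ m + j) :
    ‖Pc m j z‖ + ‖Qc m j z‖ ≤ ((m : ℝ) + j) * ‖z‖ := by
  have h0 : (0:ℝ) ≤ ‖z‖ := norm_nonneg z
  have key : ∀ c e : ℕ, (c = 0 ∨ 1 ≤ e) → (c:ℝ) * ‖z‖ ^ e ≤ c * ‖z‖ := by
    rintro c e (rfl | he)
    · simp
    · have : ‖z‖ ^ e ≤ ‖z‖ ^ 1 := pow_le_pow_of_le_one h0 hz he
      rw [pow_one] at this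
      exact mul_le_mul_of_nonneg_left this (Nat.cast_nonneg c)
  rw [Pc_abs, Qc_abs, add_mul]
  have e1 : (m:ℝ) * ‖z‖ ^ (m - 1 + j) ≤ m * ‖z‖ := by
    apply key; omega
  have e2 : (j:ℝ) * ‖z‖ ^ (m + (j - 1)) ≤ j * ‖z‖ := by
    apply key; omega
  linarith

lemma hasFDerivAt_mono (m j : ℕ) (z : ℂ) :
    HasFDerivAt (fun w : ℂ => w ^ m * ((starRingEnd ℂ) w) ^ j)
      (Pc m j z • cidL + Qc m j z • conjL) z := by
  have h1 : HasFDerivAt (fun w : ℂ => w ^ m) ((m * z ^ (m-1)) • cidL) z := by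
    refine ((hasDerivAt_pow m z).hasFDerivAt.restrictScalars ℝ).congr_fderiv ?_
    ext v
    simp [cidL, mul_comm]
  have h2 : HasFDerivAt (fun w : ℂ => ((starRingEnd ℂ) w) ^ j)
      ((j * ((starRingEnd ℂ) z) ^ (j-1)) • conjL) z := by
    have hc : HasFDerivAt (fun w : ℂ => (starRingEnd ℂ) w) conjL z :=
      conjL.hasFDerivAt
    refine (((hasDerivAt_pow j ((starRingEnd ℂ) z)).hasFDerivAt.restrictScalars ℝ).comp z
      hc).congr_fderiv ?_
    ext v
    simp [conjL, mul_comm]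
  refine (h1.mul h2).congr_fderiv ?_
  ext v
  simp [Pc, Qc, cidL, conjL]
  ring

/-- determinant of `α • id + β • conj`. -/
lemma det_alpha_beta (α β : ℂ) :
    LinearMap.det ((α • cidL + β • conjL : ℂ →L[ℝ] ℂ) : ℂ →ₗ[ℝ] ℂ)
      = Complex.normSq α - Complex.normSq β := by
  have h1 : LinearMap.det ((α • cidL + β • conjL : ℂ →L[ℝ] ℂ) : ℂ →ₗ[ℝ] ℂ)
      = Matrix.det (LinearMap.toMatrix basisOneI basisOneI
          ((α • cidL + β • conjL : ℂ →L[ℝ] ℂ) : ℂ →ₗ[ℝ] ℂ)) :=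
    (LinearMap.det_toMatrix _ _).symm
  rw [h1, Matrix.det_fin_two]
  simp [LinearMap.toMatrix_apply, Complex.coe_basisOneI_repr, Complex.normSq_apply]
  ring

section Terms

variable (a b : ℕ → ℕ → ℂ)

/-- the `(k,n)` term of the series -/
def termF (k n : ℕ) (z : ℂ) : ℂ :=
  if 1 ≤ n then
    a n k * (z ^ (n + (k-1)) * ((starRingEnd ℂ) z) ^ (k-1))
      + (starRingEnd ℂ) (b n k) * (z ^ (k-1) * ((starRingEnd ℂ) z) ^ (n + (k-1)))
  else 0

def alC (k n : ℕ) (z : ℂ) : ℂ :=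
  if 1 ≤ n then a n k * Pc (n + (k-1)) (k-1) z
    + (starRingEnd ℂ) (b n k) * Pc (k-1) (n + (k-1)) z else 0

def beC (k n : ℕ) (z : ℂ) : ℂ :=
  if 1 ≤ n then a n k * Qc (n + (k-1)) (k-1) z
    + (starRingEnd ℂ) (b n k) * Qc (k-1) (n + (k-1)) z else 0

def uB (k n : ℕ) : ℝ :=
  if 1 ≤ n then ((n : ℝ) + 2*((k:ℝ)-1)) * (‖a n k‖ + ‖b n k‖) else 0

lemma hasFDerivAt_termF (k n : ℕ) (z : ℂ) :
    HasFDerivAt (termF a b k n) (alC a b k n z • cidL + beC a b k n z • conjL) z := by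
  by_cases hn : 1 ≤ n
  · have hfun : termF a b k n = fun w : ℂ =>
        a n k * (w ^ (n + (k-1)) * ((starRingEnd ℂ) w) ^ (k-1))
          + (starRingEnd ℂ) (b n k) * (w ^ (k-1) * ((starRingEnd ℂ) w) ^ (n + (k-1))) := by
      funext w; simp [termF, hn]
    rw [hfun]
    simp only [alC, beC, if_pos hn]
    have ha := (hasFDerivAt_mono (n + (k-1)) (k-1) z).const_mul (a n k)
    have hb := (hasFDerivAt_mono (k-1) (n + (k-1)) z).const_mul ((starRingEnd ℂ) (b n k))
    refine (ha.add hb).congr_fderiv ?_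
    ext v
    simp [smul_add, cidL, conjL]
    ring
  · have hfun : termF a b k n = fun _ : ℂ => (0:ℂ) := by
      funext w; simp [termF, hn]
    rw [hfun]
    have : alC a b k n z • cidL + beC a b k n z • conjL = 0 := by
      ext v
      simp [alC, beC, if_neg hn]
    rw [this]
    exact hasFDerivAt_const (0:ℂ) z

lemma uB_nonneg {k : ℕ} (hk : 1 ≤ k) (n : ℕ) : 0 ≤ uB a b k n := by
  unfold uB
  split
  next h =>
    have h1 : (1:ℝ) ≤ (n:ℝ) := by exact_mod_cast h
    have h2 : (1:ℝ) ≤ (k:ℝ) := by exact_mod_cast hk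
    have h3 : (0:ℝ) ≤ ‖a n k‖ + ‖b n k‖ := by positivity
    nlinarith
  next => exact le_refl 0

lemma abs_al_be_le {k : ℕ} (hk : 1 ≤ k) (n : ℕ) {z : ℂ} (hz : ‖z‖ ≤ 1) :
    ‖alC a b k n z‖ + ‖beC a b k n z‖ ≤ uB a b k n := by
  unfold alC beC uB
  split
  next h =>
    obtain ⟨k', rfl⟩ : ∃ k', k = k' + 1 := ⟨k - 1, (Nat.succ_pred_eq_of_pos hk).symm⟩
    simp only [Nat.add_sub_cancel]
    have hcast : ((n + k' + k' : ℕ) : ℝ) = (n : ℝ) + 2*(((k'+1 : ℕ):ℝ)-1) := by push_cast; ring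
    have P1 := PQ_le (n + k') k' hz
    have P2 := PQ_le k' (n + k') hz
    have A1 : ‖a n (k'+1) * Pc (n + k') k' z
        + (starRingEnd ℂ) (b n (k'+1)) * Pc k' (n + k') z‖
        ≤ ‖a n (k'+1)‖ * ‖Pc (n + k') k' z‖
          + ‖b n (k'+1)‖ * ‖Pc k' (n + k') z‖ := by
      refine (norm_add_le _ _).trans ?_
      simp [map_mul]
    have B1 : ‖a n (k'+1) * Qc (n + k') k' z
        + (starRingEnd ℂ) (b n (k'+1)) * Qc k' (n + k') z‖
        ≤ ‖a n (k'+1)‖ * ‖Qc (n + k') k' z‖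
          + ‖b n (k'+1)‖ * ‖Qc k' (n + k') z‖ := by
      refine (norm_add_le _ _).trans ?_
      simp [map_mul]
    have ha0 : (0:ℝ) ≤ ‖a n (k'+1)‖ := norm_nonneg _
    have hb0 : (0:ℝ) ≤ ‖b n (k'+1)‖ := norm_nonneg _
    have hc : ((n + k' : ℕ):ℝ) + (k' : ℝ) = (n:ℝ) + 2*(((k'+1:ℕ):ℝ)-1) := by push_cast; ring
    have hc2 : ((k' : ℕ):ℝ) + ((n + k' : ℕ):ℝ) = (n:ℝ) + 2*(((k'+1:ℕ):ℝ)-1) := by push_cast; ring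
    rw [hc] at P1
    rw [hc2] at P2
    nlinarith
  next => simp

lemma abs_al_be_le' {k : ℕ} (hk : 1 ≤ k) (n : ℕ) {z : ℂ} (hz : ‖z‖ ≤ 1)
    (hkn : ¬(k = 1 ∧ n = 1)) :
    ‖alC a b k n z‖ + ‖beC a b k n z‖ ≤ uB a b k n * ‖z‖ := by
  unfold alC beC uB
  split
  next h =>
    obtain ⟨k', rfl⟩ : ∃ k', k = k' + 1 := ⟨k - 1, (Nat.succ_pred_eq_of_pos hk).symm⟩
    simp only [Nat.add_sub_cancel]
    have hdeg : 2 ≤ (n + k') + k' := by omega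
    have hdeg2 : 2 ≤ k' + (n + k') := by omega
    have P1 := PQ_le' (n + k') k' hz hdeg
    have P2 := PQ_le' k' (n + k') hz hdeg2
    have A1 : ‖a n (k'+1) * Pc (n + k') k' z
        + (starRingEnd ℂ) (b n (k'+1)) * Pc k' (n + k') z‖
        ≤ ‖a n (k'+1)‖ * ‖Pc (n + k') k' z‖
          + ‖b n (k'+1)‖ * ‖Pc k' (n + k') z‖ := by
      refine (norm_add_le _ _).trans ?_
      simp [map_mul]
    have B1 : ‖a n (k'+1) * Qc (n + k') k' z
        + (starRingEnd ℂ) (b n (k'+1)) * Qc k' (n + k') z‖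
        ≤ ‖a n (k'+1)‖ * ‖Qc (n + k') k' z‖
          + ‖b n (k'+1)‖ * ‖Qc k' (n + k') z‖ := by
      refine (norm_add_le _ _).trans ?_
      simp [map_mul]
    have ha0 : (0:ℝ) ≤ ‖a n (k'+1)‖ := norm_nonneg _
    have hb0 : (0:ℝ) ≤ ‖b n (k'+1)‖ := norm_nonneg _
    have hc : ((n + k' : ℕ):ℝ) + (k' : ℝ) = (n:ℝ) + 2*(((k'+1:ℕ):ℝ)-1) := by push_cast; ring
    have hc2 : ((k' : ℕ):ℝ) + ((n + k' : ℕ):ℝ) = (n:ℝ) + 2*(((k'+1:ℕ):ℝ)-1) := by push_cast; ring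
    rw [hc] at P1
    rw [hc2] at P2
    nlinarith [norm_nonneg z]
  next => simp

end Terms

section Series

variable (p : ℕ) (a b : ℕ → ℕ → ℂ)

def AF (z : ℂ) : ℂ := ∑ k ∈ Finset.Icc 1 p, ∑' n, alC a b k n z
def BF (z : ℂ) : ℂ := ∑ k ∈ Finset.Icc 1 p, ∑' n, beC a b k n z
def SB : ℝ := ∑ k ∈ Finset.Icc 1 p, ∑' n, uB a b k n

variable {lam : ℝ}

variable {p a b}

lemma uB_le_aux (hlam0 : 0 ≤ lam) {k : ℕ} (hk : 1 ≤ k) (n : ℕ) :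
    uB a b k n ≤ (if n = 1 then (2 * (k:ℝ) - 1) * (‖a 1 k‖ + ‖b 1 k‖)
      else 0)
      + (if 2 ≤ n then (2 * ((k : ℝ) - 1) + n * (lam * n + 1 - lam)) *
        (‖a n k‖ + ‖b n k‖) else 0) := by
  have hk1 : (1:ℝ) ≤ (k:ℝ) := by exact_mod_cast hk
  rcases Nat.lt_or_ge n 2 with hn | hn
  · interval_cases n
    · simp [uB]
    · simp only [uB, if_pos (le_refl 1), if_pos rfl, if_neg (by omega : ¬ 2 ≤ 1), add_zero]
      apply le_of_eq
      push_cast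
      ring
  · have hn1 : 1 ≤ n := by omega
    rw [if_neg (by omega : ¬ n = 1), if_pos hn, zero_add]
    unfold uB
    rw [if_pos hn1]
    apply mul_le_mul_of_nonneg_right
    · have hn2 : (2:ℝ) ≤ (n:ℝ) := by exact_mod_cast hn
      nlinarith [mul_nonneg (mul_nonneg hlam0 (by linarith : (0:ℝ) ≤ (n:ℝ)))
        (by linarith : (0:ℝ) ≤ (n:ℝ) - 1)]
    · positivity

lemma summable_uB (hF : HSLam p lam a b) (hlam0 : 0 ≤ lam) {k : ℕ}
    (hk : k ∈ Finset.Icc 1 p) : Summable (uB a b k) := by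
  have hk1 : 1 ≤ k := (Finset.mem_Icc.mp hk).1
  refine Summable.of_nonneg_of_le (uB_nonneg a b hk1) (uB_le_aux hlam0 hk1) ?_
  exact ((hasSum_ite_eq 1 _).summable).add (hF.2.2.1 k hk)

lemma tsum_uB_le (hF : HSLam p lam a b) (hlam0 : 0 ≤ lam) {k : ℕ}
    (hk : k ∈ Finset.Icc 1 p) :
    ∑' n, uB a b k n ≤ (2 * (k:ℝ) - 1) * (‖a 1 k‖ + ‖b 1 k‖)
      + ∑' n, (if 2 ≤ n then (2 * ((k : ℝ) - 1) + n * (lam * n + 1 - lam)) *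
        (‖a n k‖ + ‖b n k‖) else 0) := by
  have hk1 : 1 ≤ k := (Finset.mem_Icc.mp hk).1
  have h1 := Summable.tsum_le_tsum (uB_le_aux hlam0 hk1 (a := a) (b := b))
    (summable_uB hF hlam0 hk) (((hasSum_ite_eq 1 _).summable).add (hF.2.2.1 k hk))
  rw [Summable.tsum_add ((hasSum_ite_eq 1 _).summable) (hF.2.2.1 k hk), tsum_ite_eq] at h1
  exact h1

lemma SB_le_two (hp : 1 ≤ p) (hF : HSLam p lam a b) (hlam0 : 0 ≤ lam) : SB p a b ≤ 2 := by
  have h1 : SB p a b ≤ ∑ k ∈ Finset.Icc 1 p,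
      ((2 * (k:ℝ) - 1) * (‖a 1 k‖ + ‖b 1 k‖)
      + ∑' n, (if 2 ≤ n then (2 * ((k : ℝ) - 1) + n * (lam * n + 1 - lam)) *
        (‖a n k‖ + ‖b n k‖) else 0)) :=
    Finset.sum_le_sum (fun k hk => tsum_uB_le hF hlam0 hk)
  rw [Finset.sum_add_distrib] at h1
  have h2 := hF.2.2.2.1
  linarith

lemma uB_11 (hF : HSLam p lam a b) : uB a b 1 1 = 1 + ‖b 1 1‖ := by
  simp [uB, hF.1]

lemma cb_lt_one (hp : 1 ≤ p) (hF : HSLam p lam a b) : ‖b 1 1‖ < 1 := by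
  have h1 : (1:ℕ) ∈ Finset.Icc 1 p := Finset.mem_Icc.mpr ⟨le_refl 1, hp⟩
  have h2 : (2 * ((1:ℕ):ℝ) - 1) * (‖a 1 1‖ + ‖b 1 1‖)
      ≤ ∑ k ∈ Finset.Icc 1 p,
        (2 * (k : ℝ) - 1) * (‖a 1 k‖ + ‖b 1 k‖) := by
    apply Finset.single_le_sum (f := fun k : ℕ =>
      (2 * (k : ℝ) - 1) * (‖a 1 k‖ + ‖b 1 k‖)) ?_ h1
    intro i hi
    have hi1 : (1:ℝ) ≤ (i:ℝ) := by exact_mod_cast (Finset.mem_Icc.mp hi).1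
    have h0 : (0:ℝ) ≤ ‖a 1 i‖ + ‖b 1 i‖ := by positivity
    show (0:ℝ) ≤ (2 * (i:ℝ) - 1) * (‖a 1 i‖ + ‖b 1 i‖)
    nlinarith
  have h3 := hF.2.2.2.2.2
  rw [hF.1] at h2
  simp at h2
  linarith

lemma one_add_cb_le_SB (hp : 1 ≤ p) (hF : HSLam p lam a b) (hlam0 : 0 ≤ lam) :
    1 + ‖b 1 1‖ ≤ SB p a b := by
  have h1 : (1:ℕ) ∈ Finset.Icc 1 p := Finset.mem_Icc.mpr ⟨le_refl 1, hp⟩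
  have h2 : uB a b 1 1 ≤ ∑' n, uB a b 1 n :=
    Summable.le_tsum (summable_uB hF hlam0 h1) 1 (fun j _ => uB_nonneg a b (le_refl 1) j)
  have h3 : ∑' n, uB a b 1 n ≤ SB p a b := by
    apply Finset.single_le_sum (f := fun k : ℕ => ∑' n, uB a b k n) ?_ h1
    intro i hi
    exact tsum_nonneg (uB_nonneg a b (Finset.mem_Icc.mp hi).1)
  rw [uB_11 hF] at h2
  linarith

end Series

lemma norm_smul_cidL (c : ℂ) : ‖c • cidL‖ ≤ ‖c‖ := by
  refine ContinuousLinearMap.opNorm_le_bound _ (norm_nonneg c) (fun x => ?_)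
  simp [ContinuousLinearMap.smul_apply, smul_eq_mul, map_mul]

lemma norm_smul_conjL (c : ℂ) : ‖c • conjL‖ ≤ ‖c‖ := by
  refine ContinuousLinearMap.opNorm_le_bound _ (norm_nonneg c) (fun x => ?_)
  simp [ContinuousLinearMap.smul_apply, smul_eq_mul, map_mul]

section Main

variable {p : ℕ} {a b : ℕ → ℕ → ℂ} {lam : ℝ}

lemma polyF_eq_sum_termF : polyF p a b = fun z => ∑ k ∈ Finset.Icc 1 p, ∑' n, termF a b k n z := by
  funext w
  unfold polyF
  refine Finset.sum_congr rfl (fun k _ => ?_)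
  rw [← tsum_mul_left]
  refine tsum_congr (fun n => ?_)
  by_cases hn : 1 ≤ n
  · rw [if_pos hn]
    have hmod : ((‖w‖ : ℂ)) ^ (2 * (k-1)) = (w * (starRingEnd ℂ) w) ^ (k-1) := by
      rw [pow_mul]
      congr 1
      calc ((‖w‖ : ℂ)) ^ 2 = ((‖w‖ ^ 2 : ℝ) : ℂ) := by push_cast; ring
        _ = ((Complex.normSq w : ℝ) : ℂ) := by rw [Complex.sq_norm]
        _ = w * (starRingEnd ℂ) w := (Complex.mul_conj w).symm
    rw [hmod, termF, if_pos hn, mul_pow]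
    ring
  · rw [if_neg hn, termF, if_neg hn, mul_zero]

lemma summable_abs_albe (hF : HSLam p lam a b) (hlam0 : 0 ≤ lam) {k : ℕ}
    (hk : k ∈ Finset.Icc 1 p) {z : ℂ} (hz : ‖z‖ ≤ 1) :
    Summable (fun n => ‖alC a b k n z‖ + ‖beC a b k n z‖) := by
  refine Summable.of_nonneg_of_le (fun n => by positivity)
    (abs_al_be_le a b (Finset.mem_Icc.mp hk).1 · hz) (summable_uB hF hlam0 hk)

lemma summable_al (hF : HSLam p lam a b) (hlam0 : 0 ≤ lam) {k : ℕ}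
    (hk : k ∈ Finset.Icc 1 p) {z : ℂ} (hz : ‖z‖ ≤ 1) :
    Summable (fun n => alC a b k n z) := by
  refine Summable.of_norm (Summable.of_nonneg_of_le (fun n => norm_nonneg _)
    (fun n => ?_) (summable_abs_albe hF hlam0 hk hz))
  have := norm_nonneg (beC a b k n z)
  linarith

lemma summable_be (hF : HSLam p lam a b) (hlam0 : 0 ≤ lam) {k : ℕ}
    (hk : k ∈ Finset.Icc 1 p) {z : ℂ} (hz : ‖z‖ ≤ 1) :
    Summable (fun n => beC a b k n z) := by
  refine Summable.of_norm (Summable.of_nonneg_of_le (fun n => norm_nonneg _)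
    (fun n => ?_) (summable_abs_albe hF hlam0 hk hz))
  have := norm_nonneg (alC a b k n z)
  linarith

lemma hasFDerivAt_polyF (hF : HSLam p lam a b) (hlam0 : 0 ≤ lam) {z : ℂ}
    (hz : ‖z‖ < 1) :
    HasFDerivAt (polyF p a b) (AF p a b z • cidL + BF p a b z • conjL) z := by
  rw [polyF_eq_sum_termF]
  have hball : z ∈ Metric.ball (0:ℂ) 1 := by
    rw [mem_ball, dist_zero_right]
    exact hz
  have hk : ∀ k ∈ Finset.Icc 1 p, HasFDerivAt (fun w => ∑' n, termF a b k n w)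
      ((∑' n, alC a b k n z) • cidL + (∑' n, beC a b k n z) • conjL) z := by
    intro k hk
    have key := hasFDerivAt_tsum_of_isPreconnected (summable_uB hF hlam0 hk)
      Metric.isOpen_ball (convex_ball (0:ℂ) 1).isPreconnected
      (f := termF a b k) (f' := fun n w => alC a b k n w • cidL + beC a b k n w • conjL)
      (fun n w _ => hasFDerivAt_termF a b k n w)
      (fun n w hw => ?_) (Metric.mem_ball_self one_pos) ?_ hball
    · refine key.congr_fderiv ?_
      have hz1 : ‖z‖ ≤ 1 := le_of_lt hz
      rw [Summable.tsum_add ((summable_al hF hlam0 hk hz1).smul_const cidL)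
        ((summable_be hF hlam0 hk hz1).smul_const conjL),
        Summable.tsum_smul_const (summable_al hF hlam0 hk hz1),
        Summable.tsum_smul_const (summable_be hF hlam0 hk hz1)]
    · -- norm bound
      have hw1 : ‖w‖ ≤ 1 := by
        have : dist w 0 < 1 := hw
        rw [Complex.dist_eq, sub_zero] at this
        exact le_of_lt this
      calc ‖alC a b k n w • cidL + beC a b k n w • conjL‖
          ≤ ‖alC a b k n w • cidL‖ + ‖beC a b k n w • conjL‖ := norm_add_le _ _
        _ ≤ ‖alC a b k n w‖ + ‖beC a b k n w‖ := by
            have h1 := norm_smul_cidL (alC a b k n w)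
            have h2 := norm_smul_conjL (beC a b k n w)
            linarith
        _ ≤ uB a b k n := by
            have := abs_al_be_le a b (Finset.mem_Icc.mp hk).1 n hw1
            linarith
    · -- summability at 0
      have h0 : ∀ n, termF a b k n 0 = 0 := by
        intro n
        by_cases hn : 1 ≤ n
        · simp [termF, hn, zero_pow (by omega : n + (k-1) ≠ 0)]
        · simp [termF, hn]
      simpa [h0] using summable_zero
  refine (HasFDerivAt.fun_sum hk).congr_fderiv ?_
  rw [Finset.sum_add_distrib, ← Finset.sum_smul, ← Finset.sum_smul]
  rfl

end Main

section Central

variable {p : ℕ} {a b : ℕ → ℕ → ℂ} {lam : ℝ}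

def alC' (a b : ℕ → ℕ → ℂ) (k n : ℕ) (z : ℂ) : ℂ :=
  if k = 1 ∧ n = 1 then 0 else alC a b k n z

lemma alC_11 (hF : HSLam p lam a b) (z : ℂ) : alC a b 1 1 z = 1 := by
  simp [alC, Pc, hF.1]

lemma beC_11 (hF : HSLam p lam a b) (z : ℂ) :
    beC a b 1 1 z = (starRingEnd ℂ) (b 1 1) := by
  simp [beC, Qc, hF.1]

lemma abs_alC'_le (k n : ℕ) (z : ℂ) :
    ‖alC' a b k n z‖ ≤ ‖alC a b k n z‖ := by
  unfold alC'
  split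
  · simp [norm_nonneg]
  · exact le_rfl

lemma AF_sub_one (hp : 1 ≤ p) (hF : HSLam p lam a b) (hlam0 : 0 ≤ lam) {z : ℂ}
    (hz : ‖z‖ ≤ 1) :
    AF p a b z - 1 = ∑ k ∈ Finset.Icc 1 p, ∑' n, alC' a b k n z := by
  have h1 : (1:ℕ) ∈ Finset.Icc 1 p := Finset.mem_Icc.mpr ⟨le_refl 1, hp⟩
  have key : ∀ k ∈ Finset.Icc 1 p, ∑' n, alC a b k n z
      = (∑' n, alC' a b k n z) + (if k = 1 then 1 else 0) := by
    intro k hk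
    by_cases hk1 : k = 1
    · subst hk1
      rw [if_pos rfl]
      have hpt : ∀ n, alC a b 1 n z = alC' a b 1 n z + (if n = 1 then 1 else 0) := by
        intro n
        by_cases hn : n = 1
        · subst hn
          simp [alC', alC_11 hF]
        · simp [alC', hn]
      rw [tsum_congr hpt, Summable.tsum_add ?_ ((hasSum_ite_eq 1 (1:ℂ)).summable), tsum_ite_eq]
      refine Summable.of_norm (Summable.of_nonneg_of_le (fun n => norm_nonneg _)
        (fun n => ?_) (summable_uB hF hlam0 h1))
      refine (abs_alC'_le 1 n z).trans ?_
      have := abs_al_be_le a b (le_refl 1) n hz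
      have := norm_nonneg (beC a b 1 n z)
      linarith
    · rw [if_neg hk1, add_zero]
      refine tsum_congr (fun n => ?_)
      simp [alC', hk1]
  rw [AF, Finset.sum_congr rfl key, Finset.sum_add_distrib]
  have : ∑ k ∈ Finset.Icc 1 p, (if k = 1 then (1:ℂ) else 0) = 1 := by
    rw [Finset.sum_ite_eq' (Finset.Icc 1 p) 1 (fun _ => (1:ℂ))]
    exact if_pos h1
  rw [this]
  ring

lemma central (hp : 1 ≤ p) (hF : HSLam p lam a b) (hlam0 : 0 ≤ lam) {z : ℂ}
    (hz : ‖z‖ ≤ 1) :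
    ‖AF p a b z - 1‖ + ‖BF p a b z‖
      ≤ ‖b 1 1‖
        + ‖z‖ * (SB p a b - 1 - ‖b 1 1‖) := by
  classical
  set cb := ‖b 1 1‖ with hcb
  set r := ‖z‖ with hr
  have hr0 : 0 ≤ r := norm_nonneg z
  have h1 : (1:ℕ) ∈ Finset.Icc 1 p := Finset.mem_Icc.mpr ⟨le_refl 1, hp⟩
  -- summabilities
  have hsum_al' : ∀ k ∈ Finset.Icc 1 p, Summable (fun n => ‖alC' a b k n z‖) := by
    intro k hk
    refine Summable.of_nonneg_of_le (fun n => norm_nonneg _) (fun n => ?_)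
      (summable_uB hF hlam0 hk)
    refine (abs_alC'_le k n z).trans ?_
    have := abs_al_be_le a b (Finset.mem_Icc.mp hk).1 n hz
    have := norm_nonneg (beC a b k n z)
    linarith
  have hsum_be : ∀ k ∈ Finset.Icc 1 p, Summable (fun n => ‖beC a b k n z‖) := by
    intro k hk
    refine Summable.of_nonneg_of_le (fun n => norm_nonneg _) (fun n => ?_)
      (summable_uB hF hlam0 hk)
    have := abs_al_be_le a b (Finset.mem_Icc.mp hk).1 n hz
    have := norm_nonneg (alC a b k n z)
    linarith
  -- step 1 : abs bounds through tsums
  have step1 : ‖AF p a b z - 1‖ + ‖BF p a b z‖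
      ≤ ∑ k ∈ Finset.Icc 1 p,
          ∑' n, (‖alC' a b k n z‖ + ‖beC a b k n z‖) := by
    have hA : ‖AF p a b z - 1‖
        ≤ ∑ k ∈ Finset.Icc 1 p, ∑' n, ‖alC' a b k n z‖ := by
      rw [AF_sub_one hp hF hlam0 hz]
      refine (norm_sum_le _ _).trans (Finset.sum_le_sum (fun k hk => ?_))
      refine (norm_tsum_le_tsum_norm ?_).trans ?_
      · simpa using hsum_al' k hk
      · simp
    have hB : ‖BF p a b z‖
        ≤ ∑ k ∈ Finset.Icc 1 p, ∑' n, ‖beC a b k n z‖ := by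
      rw [BF]
      refine (norm_sum_le _ _).trans (Finset.sum_le_sum (fun k hk => ?_))
      refine (norm_tsum_le_tsum_norm ?_).trans ?_
      · simpa using hsum_be k hk
      · simp
    have := Finset.sum_add_distrib (s := Finset.Icc 1 p)
      (f := fun k => ∑' n, ‖alC' a b k n z‖)
      (g := fun k => ∑' n, ‖beC a b k n z‖)
    calc ‖AF p a b z - 1‖ + ‖BF p a b z‖
        ≤ (∑ k ∈ Finset.Icc 1 p, ∑' n, ‖alC' a b k n z‖)
          + ∑ k ∈ Finset.Icc 1 p, ∑' n, ‖beC a b k n z‖ := by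
          exact add_le_add hA hB
      _ = ∑ k ∈ Finset.Icc 1 p,
          ((∑' n, ‖alC' a b k n z‖) + ∑' n, ‖beC a b k n z‖) := by
          rw [← this]
      _ = ∑ k ∈ Finset.Icc 1 p,
          ∑' n, (‖alC' a b k n z‖ + ‖beC a b k n z‖) := by
          refine Finset.sum_congr rfl (fun k hk => ?_)
          rw [Summable.tsum_add (hsum_al' k hk) (hsum_be k hk)]
  -- step 2 : per-k bound
  have step2 : ∀ k ∈ Finset.Icc 1 p,
      ∑' n, (‖alC' a b k n z‖ + ‖beC a b k n z‖)
        ≤ (if k = 1 then cb - r * (1 + cb) else 0) + r * ∑' n, uB a b k n := by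
    intro k hk
    have hk1 : 1 ≤ k := (Finset.mem_Icc.mp hk).1
    have hsum_lhs : Summable
        (fun n => ‖alC' a b k n z‖ + ‖beC a b k n z‖) :=
      (hsum_al' k hk).add (hsum_be k hk)
    have hsum_ur : Summable (fun n => uB a b k n * r) :=
      (summable_uB hF hlam0 hk).mul_right r
    by_cases hk2 : k = 1
    · subst hk2
      rw [if_pos rfl]
      have hterm : ∀ n, ‖alC' a b 1 n z‖ + ‖beC a b 1 n z‖
          ≤ uB a b 1 n * r + (if n = 1 then cb - uB a b 1 1 * r else 0) := by
        intro n
        by_cases hn : n = 1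
        · subst hn
          rw [if_pos rfl]
          have e1 : alC' a b 1 1 z = 0 := by simp [alC']
          rw [e1, beC_11 hF]
          simp [norm_nonneg, hcb]
        · rw [if_neg hn, add_zero]
          have := abs_al_be_le' a b (le_refl 1) n (z := z) hz (by tauto)
          have e1 : alC' a b 1 n z = alC a b 1 n z := by simp [alC', hn]
          rw [e1]
          linarith [this]
      refine (Summable.tsum_le_tsum hterm hsum_lhs
        (hsum_ur.add ((hasSum_ite_eq 1 _).summable))).trans ?_
      rw [Summable.tsum_add hsum_ur ((hasSum_ite_eq 1 _).summable), tsum_ite_eq, tsum_mul_right,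
        uB_11 hF]
      ring_nf
      exact le_rfl
    · rw [if_neg hk2, zero_add]
      have hterm : ∀ n, ‖alC' a b k n z‖ + ‖beC a b k n z‖
          ≤ uB a b k n * r := by
        intro n
        have := abs_al_be_le' a b hk1 n (z := z) hz (by tauto)
        have e1 : alC' a b k n z = alC a b k n z := by simp [alC', hk2]
        rw [e1]
        linarith
      refine (Summable.tsum_le_tsum hterm hsum_lhs hsum_ur).trans ?_
      rw [tsum_mul_right]
      ring_nf
      exact le_rfl
  -- put together
  refine step1.trans ((Finset.sum_le_sum step2).trans ?_)
  rw [Finset.sum_add_distrib, ← Finset.mul_sum]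
  have : ∑ k ∈ Finset.Icc 1 p, (if k = 1 then cb - r * (1 + cb) else 0)
      = cb - r * (1 + cb) := by
    rw [Finset.sum_ite_eq' (Finset.Icc 1 p) 1 (fun _ => cb - r * (1 + cb))]
    exact if_pos h1
  rw [this]
  have : (∑ k ∈ Finset.Icc 1 p, ∑' n, uB a b k n) = SB p a b := rfl
  rw [this]
  ring_nf
  exact le_rfl

end Central

section Final

variable {p : ℕ} {a b : ℕ → ℕ → ℂ} {lam : ℝ}

lemma bound_lt_one (hp : 1 ≤ p) (hF : HSLam p lam a b) (hlam0 : 0 ≤ lam) {r : ℝ}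
    (hr0 : 0 ≤ r) (hr1 : r < 1) :
    ‖b 1 1‖ + r * (SB p a b - 1 - ‖b 1 1‖) < 1 := by
  have hTT : 0 ≤ SB p a b - 1 - ‖b 1 1‖ := by
    linarith [one_add_cb_le_SB hp hF hlam0]
  have hle : ‖b 1 1‖ + (SB p a b - 1 - ‖b 1 1‖) ≤ 1 := by
    linarith [SB_le_two hp hF hlam0]
  have hcb : ‖b 1 1‖ < 1 := cb_lt_one hp hF
  rcases eq_or_lt_of_le hTT with h | h
  · rw [← h, mul_zero, add_zero]
    exact hcb
  · nlinarith

theorem main_thm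
    (p : ℕ) (hp : 1 ≤ p) (lam : ℝ) (hlam : lam ∈ Set.Icc (0 : ℝ) 1)
    (a b : ℕ → ℕ → ℂ) (hF : HSLam p lam a b) :
    Set.InjOn (polyF p a b) (Metric.ball (0 : ℂ) 1) ∧
    ∀ z ∈ Metric.ball (0 : ℂ) 1, ∃ f' : ℂ →L[ℝ] ℂ,
      HasFDerivAt (polyF p a b) f' z ∧ 0 < LinearMap.det (f' : ℂ →ₗ[ℝ] ℂ) := by
  have hlam0 : 0 ≤ lam := hlam.1
  have habs : ∀ w : ℂ, w ∈ Metric.ball (0:ℂ) 1 → ‖w‖ < 1 := by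
    intro w hw
    rw [mem_ball, dist_zero_right] at hw
    exact hw
  constructor
  · -- injectivity
    intro z1 hz1 z2 hz2 heq
    set r := max (‖z1‖) (‖z2‖) with hrdef
    have hr1 : r < 1 := max_lt (habs z1 hz1) (habs z2 hz2)
    have hr0 : 0 ≤ r := le_trans (norm_nonneg z1) (le_max_left _ _)
    set C := ‖b 1 1‖ + r * (SB p a b - 1 - ‖b 1 1‖) with hCdef
    have hC : C < 1 := bound_lt_one hp hF hlam0 hr0 hr1
    have hTT : 0 ≤ SB p a b - 1 - ‖b 1 1‖ := by
      linarith [one_add_cb_le_SB hp hF hlam0]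
    set s := Metric.closedBall (0:ℂ) r with hsdef
    have hmem : ∀ w ∈ s, ‖w‖ ≤ r := by
      intro w hw
      rw [Metric.mem_closedBall, dist_zero_right] at hw
      exact hw
    have hderiv : ∀ w ∈ s, HasFDerivWithinAt (fun w => polyF p a b w - w)
        ((AF p a b w • cidL + BF p a b w • conjL) - cidL) s w := by
      intro w hw
      have hw1 : ‖w‖ < 1 := lt_of_le_of_lt (hmem w hw) hr1
      exact ((hasFDerivAt_polyF hF hlam0 hw1).sub (hasFDerivAt_id w)).hasFDerivWithinAt
    have hbound : ∀ w ∈ s, ‖(AF p a b w • cidL + BF p a b w • conjL) - cidL‖ ≤ C := by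
      intro w hw
      have hw1 : ‖w‖ ≤ 1 := le_of_lt (lt_of_le_of_lt (hmem w hw) hr1)
      have hrw : (AF p a b w • cidL + BF p a b w • conjL) - cidL
          = (AF p a b w - 1) • cidL + BF p a b w • conjL := by
        ext v
        simp [cidL, conjL, sub_mul]
        ring
      rw [hrw]
      have h1 := norm_smul_cidL (AF p a b w - 1)
      have h2 := norm_smul_conjL (BF p a b w)
      have h3 := central hp hF hlam0 hw1
      have h4 : ‖b 1 1‖ + ‖w‖ * (SB p a b - 1 - ‖b 1 1‖)
          ≤ C := by
        rw [hCdef]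
        have := mul_le_mul_of_nonneg_right (hmem w hw) hTT
        nlinarith [hmem w hw]
      calc ‖(AF p a b w - 1) • cidL + BF p a b w • conjL‖
          ≤ ‖(AF p a b w - 1) • cidL‖ + ‖BF p a b w • conjL‖ := norm_add_le _ _
        _ ≤ C := by linarith
    have hz1s : z1 ∈ s := by
      rw [hsdef, Metric.mem_closedBall, dist_zero_right]
      exact le_max_left _ _
    have hz2s : z2 ∈ s := by
      rw [hsdef, Metric.mem_closedBall, dist_zero_right]
      exact le_max_right _ _
    have hmv := Convex.norm_image_sub_le_of_norm_hasFDerivWithin_le hderiv hbound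
      (convex_closedBall (0:ℂ) r) hz1s hz2s
    have heval : (polyF p a b z2 - z2) - (polyF p a b z1 - z1) = z1 - z2 := by
      rw [heq]; ring
    rw [heval] at hmv
    have hnn : ‖z1 - z2‖ ≤ C * ‖z1 - z2‖ := by
      have : ‖z2 - z1‖ = ‖z1 - z2‖ := by rw [norm_sub_rev]
      rwa [this] at hmv
    have : ‖z1 - z2‖ ≤ 0 := by nlinarith [norm_nonneg (z1 - z2)]
    have : z1 - z2 = 0 := by
      have h0 := norm_nonneg (z1 - z2)
      have : ‖z1 - z2‖ = 0 := le_antisymm this h0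
      exact norm_eq_zero.mp this
    exact sub_eq_zero.mp this
  · -- sense-preserving
    intro z hz
    have hz1 : ‖z‖ < 1 := habs z hz
    refine ⟨AF p a b z • cidL + BF p a b z • conjL, hasFDerivAt_polyF hF hlam0 hz1, ?_⟩
    rw [det_alpha_beta]
    have hcen := central hp hF hlam0 (le_of_lt hz1)
    have hlt := bound_lt_one hp hF hlam0 (norm_nonneg z) hz1
    have htri : 1 - ‖AF p a b z - 1‖ ≤ ‖AF p a b z‖ := by
      have h := norm_sub_norm_le (1 : ℂ) (1 - AF p a b z)
      have e : (1:ℂ) - (1 - AF p a b z) = AF p a b z := by ring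
      rw [e] at h
      simp only [norm_one] at h
      have e2 : ‖1 - AF p a b z‖ = ‖AF p a b z - 1‖ :=
        norm_sub_rev 1 (AF p a b z)
      rw [e2] at h
      exact h
    have hBA : ‖BF p a b z‖ < ‖AF p a b z‖ := by linarith
    rw [← Complex.sq_norm, ← Complex.sq_norm]
    nlinarith [norm_nonneg (BF p a b z), norm_nonneg (AF p a b z)]

end Final


/-- Mappings of the class `HS_p(λ)` are univalent and sense-preserving on the unit disk. -/
theorem univalent_and_sense_preserving
    (p : ℕ) (hp : 1 ≤ p) (lam : ℝ) (hlam : lam ∈ Set.Icc (0 : ℝ) 1)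
    (a b : ℕ → ℕ → ℂ) (hF : HSLam p lam a b) :
    Set.InjOn (polyF p a b) (Metric.ball (0 : ℂ) 1) ∧
    ∀ z ∈ Metric.ball (0 : ℂ) 1, ∃ f' : ℂ →L[ℝ] ℂ,
      HasFDerivAt (polyF p a b) f' z ∧ 0 < LinearMap.det (f' : ℂ →ₗ[ℝ] ℂ) := by
  exact main_thm p hp lam hlam a b hF
end
end

section
/- Let k ≥ 1 and n ≥ 2 be integers, let λ ∈ [0,1] be real, and let r be a real number with 0 < r ≤ max{1/2, λ}. Then (2(k−1) + n²) · r^{2k+n−3} ≤ 2(k−1) + n(λn + 1 − λ). -/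
/-- For integers `k ≥ 1`, `n ≥ 2`, `λ ∈ [0,1]` and `0 < r ≤ max {1/2, λ}`,
one has `(2(k−1) + n²) r^{2k+n−3} ≤ 2(k−1) + n(λn + 1 − λ)`. -/
theorem coefficient_radius_inequality
    (k n : ℕ) (hk : 1 ≤ k) (hn : 2 ≤ n)
    (lam r : ℝ) (hlam : lam ∈ Set.Icc (0 : ℝ) 1)
    (hr0 : 0 < r) (hr : r ≤ max (1 / 2) lam) :
    (2 * ((k : ℝ) - 1) + (n : ℝ) ^ 2) * r ^ (2 * k + n - 3)
      ≤ 2 * ((k : ℝ) - 1) + (n : ℝ) * (lam * n + 1 - lam) := by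
  obtain ⟨hl0, hl1⟩ := hlam
  have hk1 : (1 : ℝ) ≤ (k : ℝ) := by exact_mod_cast hk
  have hn2 : (2 : ℝ) ≤ (n : ℝ) := by exact_mod_cast hn
  have ha : (0 : ℝ) ≤ 2 * ((k : ℝ) - 1) := by linarith
  have hApos : (0 : ℝ) ≤ 2 * ((k : ℝ) - 1) + (n : ℝ) ^ 2 := by nlinarith
  set m := 2 * k + n - 3 with hm
  have hm1 : 1 ≤ m := by omega
  have hmn : n - 1 ≤ m := by omega
  rcases le_max_iff.mp hr with h | h
  · -- r ≤ 1/2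
    have hrm : r ^ m ≤ (1 / 2 : ℝ) ^ m :=
      pow_le_pow_left₀ hr0.le h m
    have hstep : (2 * ((k : ℝ) - 1) + (n : ℝ) ^ 2) * r ^ m
        ≤ (2 * ((k : ℝ) - 1) + (n : ℝ) ^ 2) * (1 / 2 : ℝ) ^ m :=
      mul_le_mul_of_nonneg_left hrm hApos
    have hhalf1 : ((1:ℝ)/2) ^ m ≤ 1 :=
      pow_le_one₀ (by norm_num) (by norm_num)
    have hhalf2 : ((1:ℝ)/2) ^ m ≤ ((1:ℝ)/2) ^ (n - 1) :=
      pow_le_pow_of_le_one (by norm_num) (by norm_num) hmn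
    -- n ≤ 2^(n-1)
    have hnat : n ≤ 2 ^ (n - 1) := by
      have := Nat.lt_two_pow_self (n := n - 1)
      omega
    have hnr : (n : ℝ) ≤ 2 ^ (n - 1) := by exact_mod_cast hnat
    have hpow2pos : (0:ℝ) < 2 ^ (n - 1) := by positivity
    have heq : ((1:ℝ)/2) ^ (n - 1) = (2 ^ (n - 1))⁻¹ := by
      rw [one_div, inv_pow]
    have hn2half : (n : ℝ) ^ 2 * ((1:ℝ)/2) ^ (n - 1) ≤ n := by
      rw [heq]
      rw [mul_inv_le_iff₀' hpow2pos]
      nlinarith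
    have hhpos : (0:ℝ) ≤ ((1:ℝ)/2) ^ m := by positivity
    have h2 : (2 * ((k : ℝ) - 1) + (n : ℝ) ^ 2) * (1 / 2 : ℝ) ^ m
        ≤ 2 * ((k : ℝ) - 1) + n := by
      have e1 : 2 * ((k : ℝ) - 1) * ((1:ℝ)/2) ^ m ≤ 2 * ((k : ℝ) - 1) := by
        nlinarith
      have e2 : (n : ℝ) ^ 2 * ((1:ℝ)/2) ^ m ≤ (n : ℝ) := by
        calc (n : ℝ) ^ 2 * ((1:ℝ)/2) ^ m
            ≤ (n : ℝ) ^ 2 * ((1:ℝ)/2) ^ (n-1) :=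
              mul_le_mul_of_nonneg_left hhalf2 (by positivity)
          _ ≤ (n : ℝ) := hn2half
      linarith [e1, e2]
    have h3 : 2 * ((k : ℝ) - 1) + (n : ℝ)
        ≤ 2 * ((k : ℝ) - 1) + (n : ℝ) * (lam * n + 1 - lam) := by
      nlinarith [mul_nonneg (mul_nonneg (by linarith : (0:ℝ) ≤ (n:ℝ)) hl0)
        (by linarith : (0:ℝ) ≤ (n:ℝ) - 1)]
    linarith
  · -- r ≤ lam
    have hr1 : r ≤ 1 := le_trans h hl1
    have hrm : r ^ m ≤ r := by
      calc r ^ m ≤ r ^ 1 := pow_le_pow_of_le_one hr0.le hr1 hm1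
        _ = r := pow_one r
    have hstep : (2 * ((k : ℝ) - 1) + (n : ℝ) ^ 2) * r ^ m
        ≤ (2 * ((k : ℝ) - 1) + (n : ℝ) ^ 2) * lam :=
      mul_le_mul_of_nonneg_left (le_trans hrm h) hApos
    nlinarith
end

section
/- Let p ≥ 1 be an integer, λ ∈ [0,1/2], and let F be a polyharmonic mapping of class HS_p(λ) on the unit disk 𝔻. Then for every z ∈ 𝔻, (1 − |b_{1,1}|)|z| − ((1 − |b_{1,1}|)/(2(1+λ)))|z|² ≤ |F(z)| ≤ (1 + |b_{1,1}|)|z| + ((1 − |b_{1,1}|)/(2(1+λ)))|z|². -/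
open Complex Metric Set

/-- Distortion bounds for mappings in `HS_p(λ)`, `0 ≤ λ ≤ 1/2`. -/
theorem distortion_bounds_small_lambda
    (p : ℕ) (hp : 1 ≤ p) (lam : ℝ) (hlam : lam ∈ Set.Icc (0 : ℝ) (1 / 2))
    (a b : ℕ → ℕ → ℂ) (hF : HSLam p lam a b) :
    ∀ z ∈ Metric.ball (0 : ℂ) 1,
      (1 - ‖b 1 1‖) * ‖z‖ -
          (1 - ‖b 1 1‖) / (2 * (1 + lam)) * ‖z‖ ^ 2
        ≤ ‖polyF p a b z‖ ∧
      ‖polyF p a b z‖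
        ≤ (1 + ‖b 1 1‖) * ‖z‖ +
          (1 - ‖b 1 1‖) / (2 * (1 + lam)) * ‖z‖ ^ 2 := by
  obtain ⟨ha11, hsum, hsum2, hineq, hlow, hhigh⟩ := hF
  obtain ⟨hlam0, hlam2⟩ := hlam
  intro z hz
  have h1p : (1 : ℕ) ∈ Finset.Icc 1 p := Finset.mem_Icc.mpr ⟨le_refl 1, hp⟩
  set r := ‖z‖ with hrdef
  have hr0 : 0 ≤ r := norm_nonneg z
  have hr1 : r < 1 := by
    rw [hrdef]
    simpa using hz
  set B := ‖b 1 1‖ with hBdef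
  set c : ℕ → ℕ → ℝ := fun n k => ‖a n k‖ + ‖b n k‖ with hcdef
  have hc0 : ∀ n k, 0 ≤ c n k := fun n k =>
    add_nonneg (norm_nonneg _) (norm_nonneg _)
  have hcS : ∀ k ∈ Finset.Icc 1 p, Summable fun n => c n k := hsum
  have s2 : ∀ k ∈ Finset.Icc 1 p, Summable fun n => if 2 ≤ n then c n k else 0 := by
    intro k hk
    refine Summable.of_nonneg_of_le (fun n => ?_) (fun n => ?_) (hcS k hk)
    · split_ifs with h
      · exact hc0 n k
      · exact le_refl 0
    · split_ifs with h
      · exact le_refl _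
      · exact hc0 n k
  have s1 : ∀ k ∈ Finset.Icc 1 p, Summable fun n => if 1 ≤ n then c n k else 0 := by
    intro k hk
    refine Summable.of_nonneg_of_le (fun n => ?_) (fun n => ?_) (hcS k hk)
    · split_ifs with h
      · exact hc0 n k
      · exact le_refl 0
    · split_ifs with h
      · exact le_refl _
      · exact hc0 n k
  set g : ℕ → ℕ → ℂ := fun n k => if 1 ≤ n then
      a n k * z ^ n + (starRingEnd ℂ) (b n k) * ((starRingEnd ℂ) z) ^ n else 0 with hgdef
  have hgnorm : ∀ k n, ‖g n k‖ ≤ c n k * r ^ n := by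
    intro k n
    by_cases hn : 1 ≤ n
    · simp only [hgdef, if_pos hn]
      calc ‖a n k * z ^ n + (starRingEnd ℂ) (b n k) * ((starRingEnd ℂ) z) ^ n‖
          ≤ ‖a n k * z ^ n‖ +
            ‖(starRingEnd ℂ) (b n k) * ((starRingEnd ℂ) z) ^ n‖ :=
            norm_add_le _ _
        _ = c n k * r ^ n := by
            simp only [norm_mul, norm_pow, Complex.norm_conj, hcdef, hrdef]
            ring
    · simp only [hgdef, if_neg hn, norm_zero]
      positivity
  have hgS : ∀ k ∈ Finset.Icc 1 p, Summable fun n => g n k := by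
    intro k hk
    refine Summable.of_norm_bounded (hcS k hk) (fun n => ?_)
    refine (hgnorm k n).trans ?_
    have := pow_le_one₀ hr0 hr1.le (n := n)
    nlinarith [hc0 n k]
  set m : ℕ → ℝ := fun k => (∑' n, if 2 ≤ n then c n k else 0) +
      (if 2 ≤ k then c 1 k else 0) with hmdef
  set M := ∑ k ∈ Finset.Icc 1 p, m k with hMdef
  set w : ℂ := (starRingEnd ℂ) (b 1 1) * (starRingEnd ℂ) z with hwdef
  have hg11 : g 1 1 = z + w := by
    simp [hgdef, ha11, hwdef]
  -- tsum identity: full tail sum equals restricted parts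
  have ht : ∀ k ∈ Finset.Icc 1 p,
      (∑' n, if 1 ≤ n then c n k else 0) = (∑' n, if 2 ≤ n then c n k else 0) + c 1 k := by
    intro k hk
    rw [Summable.tsum_eq_add_tsum_ite (s1 k hk) 1]
    rw [if_pos (le_refl 1), add_comm]
    congr 1
    refine tsum_congr fun n => ?_
    rcases n with _ | n
    · simp
    · rcases n with _ | n
      · simp
      · simp [Nat.succ_le_succ, Nat.succ_le_succ (Nat.succ_le_succ (Nat.zero_le n))]
  -- Claim B preparation: bound on S1 - head
  have hb1 : ‖(∑' n, g n 1) - (z + w)‖ ≤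
      r ^ 2 * ∑' n, (if 2 ≤ n then c n 1 else 0) := by
    have hS1 : (∑' n, g n 1) - (z + w) = ∑' n, if n = 1 then 0 else g n 1 := by
      rw [Summable.tsum_eq_add_tsum_ite (hgS 1 h1p) 1, hg11]
      ring
    rw [hS1]
    refine tsum_of_norm_bounded (((s2 1 h1p).hasSum.mul_left (r ^ 2))) (fun n => ?_)
    rcases n with _ | n
    · simp [hgdef]
    · rcases n with _ | n
      · simp
      · have hn2 : 2 ≤ n + 2 := by omega
        rw [if_neg (by omega : ¬ (n + 2 = 1)), if_pos hn2]
        refine (hgnorm 1 (n + 2)).trans ?_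
        have hpow : r ^ (n + 2) ≤ r ^ 2 := pow_le_pow_of_le_one hr0 hr1.le (by omega)
        nlinarith [hc0 (n + 2) 1]
  -- bound for k ≥ 2
  have hb2 : ∀ k ∈ (Finset.Icc 1 p).erase 1,
      ‖((r : ℂ)) ^ (2 * (k - 1)) * ∑' n, g n k‖ ≤ r ^ 2 * m k := by
    intro k hk
    have hkmem : k ∈ Finset.Icc 1 p := Finset.mem_of_mem_erase hk
    have hk2 : 2 ≤ k := by
      have h1 := Finset.ne_of_mem_erase hk
      have h2 := (Finset.mem_Icc.mp hkmem).1
      omega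
    rw [norm_mul, norm_pow, Complex.norm_real, Real.norm_eq_abs, _root_.abs_of_nonneg hr0]
    have hpow : r ^ (2 * (k - 1)) ≤ r ^ 2 :=
      pow_le_pow_of_le_one hr0 hr1.le (by omega)
    have hSk : ‖∑' n, g n k‖ ≤ m k := by
      have h1 : ‖∑' n, g n k‖ ≤ ∑' n, (if 1 ≤ n then c n k else 0) := by
        refine tsum_of_norm_bounded (s1 k hkmem).hasSum (fun n => ?_)
        rcases n with _ | n
        · simp [hgdef]
        · rw [if_pos (by omega : 1 ≤ n + 1)]
          refine (hgnorm k (n + 1)).trans ?_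
          have := pow_le_one₀ hr0 hr1.le (n := n + 1)
          nlinarith [hc0 (n + 1) k]
      refine h1.trans ?_
      rw [ht k hkmem, hmdef]
      simp [if_pos hk2]
    exact mul_le_mul hpow hSk (norm_nonneg _) (by positivity)
  -- Claim B
  have hClaimB : ‖polyF p a b z - (z + w)‖ ≤ r ^ 2 * M := by
    have hpoly : polyF p a b z =
        ∑ k ∈ Finset.Icc 1 p, ((r : ℂ)) ^ (2 * (k - 1)) * ∑' n, g n k := rfl
    rw [hpoly, ← Finset.add_sum_erase _ (fun k => ((r : ℂ)) ^ (2 * (k - 1)) * ∑' n, g n k) h1p]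
    have e1 : ((r : ℂ)) ^ (2 * (1 - 1)) * (∑' n, g n 1) = ∑' n, g n 1 := by norm_num
    rw [e1]
    have step1 : ‖(∑' n, g n 1) +
        (∑ k ∈ (Finset.Icc 1 p).erase 1, ((r : ℂ)) ^ (2 * (k - 1)) * ∑' n, g n k) - (z + w)‖
        ≤ ‖(∑' n, g n 1) - (z + w)‖ +
          ‖∑ k ∈ (Finset.Icc 1 p).erase 1, ((r : ℂ)) ^ (2 * (k - 1)) * ∑' n, g n k‖ := by
      have := norm_add_le ((∑' n, g n 1) - (z + w))
        (∑ k ∈ (Finset.Icc 1 p).erase 1, ((r : ℂ)) ^ (2 * (k - 1)) * ∑' n, g n k)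
      calc ‖(∑' n, g n 1) +
            (∑ k ∈ (Finset.Icc 1 p).erase 1, ((r : ℂ)) ^ (2 * (k - 1)) * ∑' n, g n k) - (z + w)‖
          = ‖((∑' n, g n 1) - (z + w)) +
            (∑ k ∈ (Finset.Icc 1 p).erase 1, ((r : ℂ)) ^ (2 * (k - 1)) * ∑' n, g n k)‖ := by
            congr 1; ring
        _ ≤ _ := this
    refine step1.trans ?_
    have step2 : ‖∑ k ∈ (Finset.Icc 1 p).erase 1,
        ((r : ℂ)) ^ (2 * (k - 1)) * ∑' n, g n k‖
        ≤ ∑ k ∈ (Finset.Icc 1 p).erase 1, r ^ 2 * m k := by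
      refine (norm_sum_le _ _).trans ?_
      exact Finset.sum_le_sum hb2
    have hm1 : m 1 = ∑' n, (if 2 ≤ n then c n 1 else 0) := by
      simp [hmdef]
    have hm1' : r ^ 2 * (∑' n, if 2 ≤ n then c n 1 else 0) = r ^ 2 * m 1 := by rw [hm1]
    have total := add_le_add (hb1.trans_eq hm1') step2
    have hM' : M = m 1 + ∑ k ∈ (Finset.Icc 1 p).erase 1, m k :=
      (Finset.add_sum_erase _ m h1p).symm
    have heq : r ^ 2 * m 1 + ∑ k ∈ (Finset.Icc 1 p).erase 1, r ^ 2 * m k = r ^ 2 * M := by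
      rw [← Finset.mul_sum, ← mul_add, ← hM']
    exact total.trans_eq heq
  -- Claim A : coefficient bound
  have hW : (0 : ℝ) < 2 * (1 + lam) := by linarith
  have hClaimA : 2 * (1 + lam) * M ≤ 1 - B := by
    have key1 : ∀ k ∈ Finset.Icc 1 p,
        2 * (1 + lam) * (∑' n, if 2 ≤ n then c n k else 0)
          ≤ ∑' n, if 2 ≤ n then (2 * ((k : ℝ) - 1) + n * (lam * n + 1 - lam)) * c n k else 0 := by
      intro k hk
      rw [← tsum_mul_left]
      refine Summable.tsum_le_tsum (fun n => ?_) ((s2 k hk).mul_left _) (hsum2 k hk)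
      by_cases hn : 2 ≤ n
      · rw [if_pos hn, if_pos hn]
        refine mul_le_mul_of_nonneg_right ?_ (hc0 n k)
        have hk1 : (1 : ℝ) ≤ (k : ℝ) := by
          exact_mod_cast (Finset.mem_Icc.mp hk).1
        have hn2 : (2 : ℝ) ≤ (n : ℝ) := by exact_mod_cast hn
        nlinarith [mul_nonneg (mul_nonneg hlam0 (by linarith : (0:ℝ) ≤ (n:ℝ) - 2))
          (by linarith : (0:ℝ) ≤ (n:ℝ) + 1)]
      · simp [hn]
    have key2 : ∀ k ∈ Finset.Icc 1 p,
        2 * (1 + lam) * (if 2 ≤ k then c 1 k else 0)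
          ≤ (if 2 ≤ k then (2 * (k : ℝ) - 1) * c 1 k else 0) := by
      intro k hk
      by_cases hk2 : 2 ≤ k
      · rw [if_pos hk2, if_pos hk2]
        refine mul_le_mul_of_nonneg_right ?_ (hc0 1 k)
        have : (2 : ℝ) ≤ (k : ℝ) := by exact_mod_cast hk2
        linarith
      · simp [hk2]
    have hsum_split : 2 * (1 + lam) * M ≤
        (∑ k ∈ Finset.Icc 1 p, ∑' n,
          if 2 ≤ n then (2 * ((k : ℝ) - 1) + n * (lam * n + 1 - lam)) * c n k else 0) +
        ∑ k ∈ Finset.Icc 1 p, (if 2 ≤ k then (2 * (k : ℝ) - 1) * c 1 k else 0) := by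
      rw [hMdef, Finset.mul_sum, ← Finset.sum_add_distrib]
      refine Finset.sum_le_sum (fun k hk => ?_)
      rw [hmdef]
      have := add_le_add (key1 k hk) (key2 k hk)
      calc 2 * (1 + lam) * ((∑' n, if 2 ≤ n then c n k else 0) + (if 2 ≤ k then c 1 k else 0))
          = 2 * (1 + lam) * (∑' n, if 2 ≤ n then c n k else 0) +
            2 * (1 + lam) * (if 2 ≤ k then c 1 k else 0) := by ring
        _ ≤ _ := this
    have hite_sum : ∑ k ∈ Finset.Icc 1 p, (if 2 ≤ k then (2 * (k : ℝ) - 1) * c 1 k else 0)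
        = (∑ k ∈ Finset.Icc 1 p, (2 * (k : ℝ) - 1) * c 1 k) - (2 * (1 : ℝ) - 1) * c 1 1 := by
      rw [← Finset.add_sum_erase _ (fun k : ℕ => (2 * (k : ℝ) - 1) * c 1 k) h1p,
        ← Finset.add_sum_erase _ (fun k : ℕ => if 2 ≤ k then (2 * (k : ℝ) - 1) * c 1 k else 0) h1p]
      rw [if_neg (by omega : ¬ (2 ≤ 1))]
      rw [Finset.sum_congr rfl (fun k hk => by
        have h1 := Finset.ne_of_mem_erase hk
        have h2 := (Finset.mem_Icc.mp (Finset.mem_of_mem_erase hk)).1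
        rw [if_pos (by omega : 2 ≤ k)])]
      push_cast
      ring
    have hc11 : c 1 1 = 1 + B := by
      rw [hcdef]
      simp [ha11, hBdef]
    rw [hite_sum] at hsum_split
    have := hineq
    rw [hc11] at hsum_split
    push_cast at hsum_split
    linarith
  -- combine: r^2 * M ≤ (1-B)/(2*(1+lam)) * r^2
  have hMR : M ≤ (1 - B) / (2 * (1 + lam)) := by
    rw [le_div_iff₀ hW]
    linarith
  have hkey : ‖polyF p a b z - (z + w)‖ ≤ (1 - B) / (2 * (1 + lam)) * r ^ 2 := by
    refine hClaimB.trans ?_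
    have : r ^ 2 * M ≤ r ^ 2 * ((1 - B) / (2 * (1 + lam))) :=
      mul_le_mul_of_nonneg_left hMR (by positivity)
    linarith [this]
  -- head bounds
  have hwabs : ‖w‖ = B * r := by
    rw [hwdef, norm_mul, Complex.norm_conj, Complex.norm_conj]
  have hhu : ‖z + w‖ ≤ (1 + B) * r := by
    have := norm_add_le z w
    rw [hwabs] at this
    rw [← hrdef] at this
    linarith
  have hhl : (1 - B) * r ≤ ‖z + w‖ := by
    have h := norm_add_le (z + w) (-w)
    rw [show z + w + -w = z by ring, norm_neg, hwabs, ← hrdef] at h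
    linarith
  -- final assembly
  have habs1 : ‖polyF p a b z‖ ≤
      ‖z + w‖ + ‖polyF p a b z - (z + w)‖ := by
    have := norm_add_le (z + w) (polyF p a b z - (z + w))
    rwa [show z + w + (polyF p a b z - (z + w)) = polyF p a b z by ring] at this
  have habs2 : ‖z + w‖ ≤
      ‖polyF p a b z‖ + ‖polyF p a b z - (z + w)‖ := by
    have := norm_add_le (polyF p a b z) (-(polyF p a b z - (z + w)))
    rwa [show polyF p a b z + -(polyF p a b z - (z + w)) = z + w by ring, norm_neg] at this
  constructor
  · linarith
  · linarith
end

section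
/- Let p ≥ 2 be an integer, λ ∈ (1/2, 1], and let F be a polyharmonic mapping of class HS_p(λ) on the unit disk 𝔻. Then for every z ∈ 𝔻, (1 − |b_{1,1}|)|z| − ((1 − |b_{1,1}| − 3(|a_{1,2}| + |b_{1,2}|))/(2(1+λ)))|z|² − (|a_{1,2}| + |b_{1,2}|)|z|³ ≤ |F(z)| ≤ (1 + |b_{1,1}|)|z| + ((1 − |b_{1,1}| − 3(|a_{1,2}| + |b_{1,2}|))/(2(1+λ)))|z|² + (|a_{1,2}| + |b_{1,2}|)|z|³. -/
open Complex Metric Set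

/-- `t_{n,k} = |a_{n,k}| + |b_{n,k}|`. -/
noncomputable def tt (a b : ℕ → ℕ → ℂ) (n k : ℕ) : ℝ :=
  ‖a n k‖ + ‖b n k‖

/-- The tail (n ≥ 2) of the inner series. -/
noncomputable def gg (a b : ℕ → ℕ → ℂ) (z : ℂ) (k n : ℕ) : ℂ :=
  if 2 ≤ n then a n k * z ^ n + (starRingEnd ℂ) (b n k) * ((starRingEnd ℂ) z) ^ n else 0

/-- Distortion bounds for mappings in `HS_p(λ)`, `1/2 < λ ≤ 1`, `p ≥ 2`. -/
theorem distortion_bounds_large_lambda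
    (p : ℕ) (hp : 2 ≤ p) (lam : ℝ) (hlam : lam ∈ Set.Ioc (1 / 2 : ℝ) 1)
    (a b : ℕ → ℕ → ℂ) (hF : HSLam p lam a b) :
    ∀ z ∈ Metric.ball (0 : ℂ) 1,
      (1 - ‖b 1 1‖) * ‖z‖ -
          (1 - ‖b 1 1‖ - 3 * (‖a 1 2‖ + ‖b 1 2‖)) /
            (2 * (1 + lam)) * ‖z‖ ^ 2 -
          (‖a 1 2‖ + ‖b 1 2‖) * ‖z‖ ^ 3
        ≤ ‖polyF p a b z‖ ∧
      ‖polyF p a b z‖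
        ≤ (1 + ‖b 1 1‖) * ‖z‖ +
          (1 - ‖b 1 1‖ - 3 * (‖a 1 2‖ + ‖b 1 2‖)) /
            (2 * (1 + lam)) * ‖z‖ ^ 2 +
          (‖a 1 2‖ + ‖b 1 2‖) * ‖z‖ ^ 3 := by
  obtain ⟨ha11, hsumab, hsumV, hle, hge1, hlt2⟩ := hF
  obtain ⟨hlam1, hlam2⟩ := hlam
  have hlam0 : (0:ℝ) < lam := lt_trans (by norm_num) hlam1
  intro z hz
  have hr1 : ‖z‖ < 1 := by simpa [Complex.dist_eq] using hz
  have hr0 : (0:ℝ) ≤ ‖z‖ := norm_nonneg z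
  set r := ‖z‖ with hrdef
  have hr1' : r ≤ 1 := hr1.le
  have ht0 : ∀ n k, 0 ≤ tt a b n k :=
    fun n k => add_nonneg (norm_nonneg _) (norm_nonneg _)
  -- basic bound for a single term
  have habs_term : ∀ (n k : ℕ),
      ‖a n k * z ^ n + (starRingEnd ℂ) (b n k) * ((starRingEnd ℂ) z) ^ n‖
        ≤ tt a b n k * r ^ n := by
    intro n k
    calc ‖a n k * z ^ n + (starRingEnd ℂ) (b n k) * ((starRingEnd ℂ) z) ^ n‖
        ≤ ‖a n k * z ^ n‖
            + ‖(starRingEnd ℂ) (b n k) * ((starRingEnd ℂ) z) ^ n‖ :=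
          norm_add_le _ _
      _ = ‖a n k‖ * r ^ n + ‖b n k‖ * r ^ n := by
          simp [norm_mul, norm_pow, Complex.norm_conj, hrdef]
      _ = tt a b n k * r ^ n := by rw [tt]; ring
  -- summability of the norms of gg
  have hsumgnorm : ∀ k ∈ Finset.Icc 1 p, Summable (fun n => ‖gg a b z k n‖) := by
    intro k hk
    apply Summable.of_nonneg_of_le (fun n => norm_nonneg _) _ (hsumab k hk)
    intro n
    by_cases hn : 2 ≤ n
    · simp only [gg, hn, if_true]
      refine (habs_term n k).trans ?_
      have := pow_le_one₀ hr0 hr1' (n := n)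
      have h := ht0 n k
      simp only [tt] at h ⊢
      nlinarith
    · simp only [gg, hn, if_false, norm_zero]
      exact ht0 n k
  have hsumg : ∀ k ∈ Finset.Icc 1 p, Summable (gg a b z k) :=
    fun k hk => Summable.of_norm (hsumgnorm k hk)
  -- summability of U k bound
  have hsumU : ∀ k ∈ Finset.Icc 1 p,
      Summable (fun n : ℕ => if 2 ≤ n then tt a b n k else 0) := by
    intro k hk
    apply Summable.of_nonneg_of_le (fun n => ?_) (fun n => ?_) (hsumab k hk)
    · by_cases hn : 2 ≤ n
      · simp only [hn, if_true]; exact ht0 n k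
      · simp only [hn, if_false]; positivity
    · by_cases hn : 2 ≤ n
      · simp only [hn, if_true, tt]
        exact le_rfl
      · simp only [hn, if_false]; positivity
  -- the inner tsum splits as head + tail
  have htsum : ∀ k ∈ Finset.Icc 1 p,
      (∑' n : ℕ, if 1 ≤ n then
        a n k * z ^ n + (starRingEnd ℂ) (b n k) * ((starRingEnd ℂ) z) ^ n else 0)
      = (a 1 k * z + (starRingEnd ℂ) (b 1 k) * (starRingEnd ℂ) z)
          + ∑' n, gg a b z k n := by
    intro k hk
    have hsplit : ∀ n : ℕ,
        (if 1 ≤ n then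
          a n k * z ^ n + (starRingEnd ℂ) (b n k) * ((starRingEnd ℂ) z) ^ n else 0)
        = (if n = 1 then a 1 k * z + (starRingEnd ℂ) (b 1 k) * (starRingEnd ℂ) z else 0)
            + gg a b z k n := by
      intro n
      match n with
      | 0 => simp [gg]
      | 1 => simp [gg]
      | (m+2) => simp [gg, Nat.le_add_left]
    calc (∑' n : ℕ, if 1 ≤ n then
          a n k * z ^ n + (starRingEnd ℂ) (b n k) * ((starRingEnd ℂ) z) ^ n else 0)
        = ∑' n : ℕ,
            ((if n = 1 then a 1 k * z + (starRingEnd ℂ) (b 1 k) * (starRingEnd ℂ) z else 0)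
              + gg a b z k n) := tsum_congr hsplit
      _ = (∑' n : ℕ, if n = 1 then
              a 1 k * z + (starRingEnd ℂ) (b 1 k) * (starRingEnd ℂ) z else 0)
            + ∑' n, gg a b z k n :=
          Summable.tsum_add ((hasSum_ite_eq 1 _).summable) (hsumg k hk)
      _ = _ := by rw [tsum_ite_eq]
  -- split the k-range
  have hI : Finset.Icc 1 p = insert 1 (insert 2 (Finset.Icc 3 p)) := by
    ext x
    simp only [Finset.mem_Icc, Finset.mem_insert]
    omega
  have h1n : (1:ℕ) ∉ insert 2 (Finset.Icc 3 p) := by simp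
  have h2n : (2:ℕ) ∉ Finset.Icc 3 p := by simp
  have h1mem : (1:ℕ) ∈ Finset.Icc 1 p := by simp [Finset.mem_Icc]; omega
  have h2mem : (2:ℕ) ∈ Finset.Icc 1 p := by simp [Finset.mem_Icc]; omega
  -- decomposition of F
  set M : ℂ := (z + (starRingEnd ℂ) (b 1 1) * (starRingEnd ℂ) z)
      + ((r:ℂ))^2 * (a 1 2 * z + (starRingEnd ℂ) (b 1 2) * (starRingEnd ℂ) z) with hM
  set A3 : ℂ := ∑ k ∈ Finset.Icc 3 p, ((r:ℂ))^(2*(k-1)) *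
      (a 1 k * z + (starRingEnd ℂ) (b 1 k) * (starRingEnd ℂ) z) with hA3
  set B : ℂ := ∑ k ∈ Finset.Icc 1 p, ((r:ℂ))^(2*(k-1)) * (∑' n, gg a b z k n) with hB
  have hFeq : polyF p a b z = M + (A3 + B) := by
    rw [polyF]
    calc (∑ k ∈ Finset.Icc 1 p, ((r:ℂ)) ^ (2*(k-1)) *
          ∑' n : ℕ, if 1 ≤ n then
            a n k * z ^ n + (starRingEnd ℂ) (b n k) * ((starRingEnd ℂ) z) ^ n else 0)
        = ∑ k ∈ Finset.Icc 1 p,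
            (((r:ℂ)) ^ (2*(k-1)) * (a 1 k * z + (starRingEnd ℂ) (b 1 k) * (starRingEnd ℂ) z)
              + ((r:ℂ)) ^ (2*(k-1)) * (∑' n, gg a b z k n)) := by
          refine Finset.sum_congr rfl (fun k hk => ?_)
          rw [htsum k hk, mul_add]
      _ = (∑ k ∈ Finset.Icc 1 p, ((r:ℂ)) ^ (2*(k-1)) *
              (a 1 k * z + (starRingEnd ℂ) (b 1 k) * (starRingEnd ℂ) z)) + B := by
          rw [Finset.sum_add_distrib]
      _ = M + (A3 + B) := by
          rw [hI, Finset.sum_insert h1n, Finset.sum_insert h2n]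
          simp only [ha11, one_mul]
          norm_num
          ring
  -- bound on A3
  have hUnonneg : ∀ k, 0 ≤ ∑' n : ℕ, (if 2 ≤ n then tt a b n k else 0) := by
    intro k
    refine tsum_nonneg (fun n => ?_)
    by_cases hn : 2 ≤ n <;> simp [hn, tt, norm_nonneg, add_nonneg]
  have hA3bd : ‖A3‖ ≤ r^2 * ∑ k ∈ Finset.Icc 3 p, tt a b 1 k := by
    rw [hA3, Finset.mul_sum]
    refine (norm_sum_le _ _).trans (Finset.sum_le_sum (fun k hk => ?_))
    have hk3 : 3 ≤ k := (Finset.mem_Icc.mp hk).1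
    rw [norm_mul, norm_pow, Complex.norm_real, Real.norm_of_nonneg hr0]
    have h1 : ‖a 1 k * z + (starRingEnd ℂ) (b 1 k) * (starRingEnd ℂ) z‖
        ≤ tt a b 1 k * r := by
      have := habs_term 1 k
      simpa [pow_one] using this
    calc r^(2*(k-1)) * ‖a 1 k * z + (starRingEnd ℂ) (b 1 k) * (starRingEnd ℂ) z‖
        ≤ r^(2*(k-1)) * (tt a b 1 k * r) := by
          exact mul_le_mul_of_nonneg_left h1 (pow_nonneg hr0 _)
      _ = tt a b 1 k * r^(2*(k-1)+1) := by rw [pow_succ]; ring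
      _ ≤ tt a b 1 k * r^2 := by
          exact mul_le_mul_of_nonneg_left
            (pow_le_pow_of_le_one hr0 hr1' (by omega)) (ht0 1 k)
      _ = r^2 * tt a b 1 k := by ring
  -- bound on B
  have hBbd : ‖B‖ ≤ r^2 * ∑ k ∈ Finset.Icc 1 p,
      ∑' n : ℕ, (if 2 ≤ n then tt a b n k else 0) := by
    rw [hB, Finset.mul_sum]
    refine (norm_sum_le _ _).trans (Finset.sum_le_sum (fun k hk => ?_))
    rw [norm_mul, norm_pow, Complex.norm_real, Real.norm_of_nonneg hr0]
    have hT : ‖∑' n, gg a b z k n‖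
        ≤ r^2 * ∑' n : ℕ, (if 2 ≤ n then tt a b n k else 0) := by
      have h1 : ‖∑' n, gg a b z k n‖ ≤ ∑' n, ‖gg a b z k n‖ :=
        norm_tsum_le_tsum_norm (hsumgnorm k hk)
      have h2 : (∑' n, ‖gg a b z k n‖)
          ≤ ∑' n : ℕ, r^2 * (if 2 ≤ n then tt a b n k else 0) := by
        refine Summable.tsum_le_tsum (fun n => ?_) (hsumgnorm k hk) ((hsumU k hk).mul_left _)
        by_cases hn : 2 ≤ n
        · simp only [gg, hn, if_true]
          refine (habs_term n k).trans ?_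
          calc tt a b n k * r ^ n ≤ tt a b n k * r ^ 2 :=
                mul_le_mul_of_nonneg_left (pow_le_pow_of_le_one hr0 hr1' hn) (ht0 n k)
            _ = r^2 * tt a b n k := by ring
        · simp [gg, hn]
      rw [tsum_mul_left] at h2
      exact h1.trans h2
    calc r^(2*(k-1)) * ‖∑' n, gg a b z k n‖
        ≤ 1 * (r^2 * ∑' n : ℕ, (if 2 ≤ n then tt a b n k else 0)) :=
          mul_le_mul (pow_le_one₀ hr0 hr1') hT (norm_nonneg _) zero_le_one
      _ = r^2 * ∑' n : ℕ, (if 2 ≤ n then tt a b n k else 0) := one_mul _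
  -- the key coefficient inequality
  have hCq : (∑ k ∈ Finset.Icc 3 p, tt a b 1 k)
      + (∑ k ∈ Finset.Icc 1 p, ∑' n : ℕ, (if 2 ≤ n then tt a b n k else 0))
      ≤ (1 - ‖b 1 1‖ - 3 * (‖a 1 2‖ + ‖b 1 2‖))
          / (2 * (1 + lam)) := by
    have hpos : (0:ℝ) < 2 * (1 + lam) := by linarith
    rw [le_div_iff₀ hpos]
    -- tsum comparison for each k
    have hUV : ∀ k ∈ Finset.Icc 1 p,
        2 * (1 + lam) * (∑' n : ℕ, (if 2 ≤ n then tt a b n k else 0))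
        ≤ ∑' n : ℕ, (if 2 ≤ n then (2 * ((k : ℝ) - 1) + n * (lam * n + 1 - lam)) *
            (‖a n k‖ + ‖b n k‖) else 0) := by
      intro k hk
      have hk1 : 1 ≤ k := (Finset.mem_Icc.mp hk).1
      rw [← tsum_mul_left]
      refine Summable.tsum_le_tsum (fun n => ?_) ((hsumU k hk).mul_left _) (hsumV k hk)
      by_cases hn : 2 ≤ n
      · simp only [hn, if_true]
        have hcoef : 2 * (1 + lam) ≤ 2 * ((k : ℝ) - 1) + n * (lam * n + 1 - lam) := by
          have hkc : (1:ℝ) ≤ (k:ℝ) := by exact_mod_cast hk1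
          have hnc : (2:ℝ) ≤ (n:ℝ) := by exact_mod_cast hn
          nlinarith [mul_nonneg hlam0.le
            (mul_nonneg (by linarith : (0:ℝ) ≤ (n:ℝ) - 2) (by linarith : (0:ℝ) ≤ (n:ℝ) + 1))]
        exact mul_le_mul_of_nonneg_right hcoef (ht0 n k)
      · simp [hn]
    have hsumUV : 2 * (1 + lam) *
        (∑ k ∈ Finset.Icc 1 p, ∑' n : ℕ, (if 2 ≤ n then tt a b n k else 0))
        ≤ ∑ k ∈ Finset.Icc 1 p, ∑' n : ℕ,
          (if 2 ≤ n then (2 * ((k : ℝ) - 1) + n * (lam * n + 1 - lam)) *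
            (‖a n k‖ + ‖b n k‖) else 0) := by
      rw [Finset.mul_sum]
      exact Finset.sum_le_sum hUV
    -- head comparison for k ≥ 3
    have h3 : 2 * (1 + lam) * (∑ k ∈ Finset.Icc 3 p, tt a b 1 k)
        ≤ ∑ k ∈ Finset.Icc 3 p,
          (2 * (k : ℝ) - 1) * (‖a 1 k‖ + ‖b 1 k‖) := by
      rw [Finset.mul_sum]
      refine Finset.sum_le_sum (fun k hk => ?_)
      have hk3 : 3 ≤ k := (Finset.mem_Icc.mp hk).1
      have hkc : (3:ℝ) ≤ (k:ℝ) := by exact_mod_cast hk3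
      have : 2 * (1 + lam) ≤ 2 * (k:ℝ) - 1 := by linarith
      exact mul_le_mul_of_nonneg_right this (ht0 1 k)
    -- split S
    have hS : ∑ k ∈ Finset.Icc 1 p,
        (2 * (k : ℝ) - 1) * (‖a 1 k‖ + ‖b 1 k‖)
        = (1 + ‖b 1 1‖)
          + 3 * (‖a 1 2‖ + ‖b 1 2‖)
          + ∑ k ∈ Finset.Icc 3 p,
            (2 * (k : ℝ) - 1) * (‖a 1 k‖ + ‖b 1 k‖) := by
      rw [hI, Finset.sum_insert h1n, Finset.sum_insert h2n, ha11, norm_one]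
      norm_num
      ring
    simp only [tt] at hsumUV h3 ⊢
    nlinarith [hle, hsumUV, h3, hS]
  -- nonnegativity of things
  have hR : ‖A3 + B‖
      ≤ (1 - ‖b 1 1‖ - 3 * (‖a 1 2‖ + ‖b 1 2‖))
          / (2 * (1 + lam)) * r^2 := by
    have h1 : ‖A3 + B‖ ≤ ‖A3‖ + ‖B‖ :=
      norm_add_le _ _
    have h2 : ‖A3‖ + ‖B‖
        ≤ r^2 * ((∑ k ∈ Finset.Icc 3 p, tt a b 1 k)
          + (∑ k ∈ Finset.Icc 1 p, ∑' n : ℕ, (if 2 ≤ n then tt a b n k else 0))) := by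
      rw [mul_add]; exact add_le_add hA3bd hBbd
    have h3 : r^2 * ((∑ k ∈ Finset.Icc 3 p, tt a b 1 k)
          + (∑ k ∈ Finset.Icc 1 p, ∑' n : ℕ, (if 2 ≤ n then tt a b n k else 0)))
        ≤ r^2 * ((1 - ‖b 1 1‖
            - 3 * (‖a 1 2‖ + ‖b 1 2‖)) / (2 * (1 + lam))) :=
      mul_le_mul_of_nonneg_left hCq (sq_nonneg r)
    calc ‖A3 + B‖ ≤ _ := h1
      _ ≤ _ := h2
      _ ≤ _ := h3
      _ = _ := by ring
  -- bounds on M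
  have habs_h1_le : ‖z + (starRingEnd ℂ) (b 1 1) * (starRingEnd ℂ) z‖
      ≤ r + ‖b 1 1‖ * r := by
    refine (norm_add_le _ _).trans ?_
    simp [norm_mul, Complex.norm_conj, hrdef]
  have habs_h1_ge : r - ‖b 1 1‖ * r
      ≤ ‖z + (starRingEnd ℂ) (b 1 1) * (starRingEnd ℂ) z‖ := by
    have h := norm_add_le (z + (starRingEnd ℂ) (b 1 1) * (starRingEnd ℂ) z)
      (-((starRingEnd ℂ) (b 1 1) * (starRingEnd ℂ) z))
    simp only [add_neg_cancel_right, norm_neg, norm_mul, Complex.norm_conj] at h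
    rw [hrdef]; linarith
  have habs_h2 : ‖a 1 2 * z + (starRingEnd ℂ) (b 1 2) * (starRingEnd ℂ) z‖
      ≤ (‖a 1 2‖ + ‖b 1 2‖) * r := by
    have := habs_term 1 2
    simpa [pow_one, tt] using this
  have habs_c2h2 : ‖((r:ℂ))^2 *
      (a 1 2 * z + (starRingEnd ℂ) (b 1 2) * (starRingEnd ℂ) z)‖
      ≤ (‖a 1 2‖ + ‖b 1 2‖) * r^3 := by
    rw [norm_mul, norm_pow, Complex.norm_real, Real.norm_of_nonneg hr0]
    calc r^2 * ‖a 1 2 * z + (starRingEnd ℂ) (b 1 2) * (starRingEnd ℂ) z‖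
        ≤ r^2 * ((‖a 1 2‖ + ‖b 1 2‖) * r) :=
          mul_le_mul_of_nonneg_left habs_h2 (sq_nonneg r)
      _ = (‖a 1 2‖ + ‖b 1 2‖) * r^3 := by ring
  have hMle : ‖M‖ ≤ (1 + ‖b 1 1‖) * r
      + (‖a 1 2‖ + ‖b 1 2‖) * r^3 := by
    rw [hM]
    refine (norm_add_le _ _).trans ?_
    have := habs_h1_le
    linarith [habs_c2h2]
  have hMge : (1 - ‖b 1 1‖) * r
      - (‖a 1 2‖ + ‖b 1 2‖) * r^3 ≤ ‖M‖ := by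
    have h := norm_add_le M
      (-(((r:ℂ))^2 * (a 1 2 * z + (starRingEnd ℂ) (b 1 2) * (starRingEnd ℂ) z)))
    rw [hM] at h
    simp only [add_neg_cancel_right, norm_neg] at h
    have h2 := habs_c2h2
    have h3 := habs_h1_ge
    rw [← hM] at h
    nlinarith [h, h2, h3]
  -- conclude
  rw [hFeq]
  have hup : ‖M + (A3 + B)‖ ≤ ‖M‖ + ‖A3 + B‖ :=
    norm_add_le _ _
  have hdn : ‖M‖ ≤ ‖M + (A3 + B)‖ + ‖A3 + B‖ := by
    have h := norm_add_le (M + (A3 + B)) (-(A3 + B))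
    simp only [add_neg_cancel_right, norm_neg] at h
    exact h
  constructor
  · linarith [hMge, hR, hdn]
  · linarith [hMle, hR, hup]
end

section
/- Let p ≥ 1 be an integer, λ ∈ [0,1], and let F be a polyharmonic mapping of class HS_p(λ) on the unit disk 𝔻, with harmonic components G_k(z) = Σ_{n=1}^∞ (a_{n,k} z^n + conj(b_{n,k}) conj(z)^n) for 1 ≤ k ≤ p. Then for each k ∈ {1,…,p} and every z ∈ 𝔻, |G_k(z)| ≤ (|a_{1,k}| + |b_{1,k}|)|z| + ((1 − |b_{1,1}|)/(2(1+λ)))|z|². -/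
open Complex Metric Set

set_option maxHeartbeats 1000000 in
/-- Bound on the harmonic components `G_k` of a mapping `F ∈ HS_p(λ)`. -/
theorem harmonic_component_bound
    (p : ℕ) (hp : 1 ≤ p) (lam : ℝ) (hlam : lam ∈ Set.Icc (0 : ℝ) 1)
    (a b : ℕ → ℕ → ℂ) (hF : HSLam p lam a b) :
    ∀ k ∈ Finset.Icc 1 p, ∀ z ∈ Metric.ball (0 : ℂ) 1,
      ‖∑' n : ℕ, if 1 ≤ n then
          a n k * z ^ n + (starRingEnd ℂ) (b n k) * ((starRingEnd ℂ) z) ^ n else 0‖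
        ≤ (‖a 1 k‖ + ‖b 1 k‖) * ‖z‖ +
          (1 - ‖b 1 1‖) / (2 * (1 + lam)) * ‖z‖ ^ 2 := by
  
  obtain ⟨ha11, hsum, hwsum, hW, hS1, hS2⟩ := hF
  obtain ⟨hlam0, hlam1⟩ := hlam
  intro k hk z hz
  obtain ⟨hk1, hkp⟩ := Finset.mem_Icc.mp hk
  have hr0 : 0 ≤ ‖z‖ := norm_nonneg z
  have hr1 : ‖z‖ < 1 := by simpa using hz
  set r := ‖z‖ with hrdef
  set c : ℕ → ℝ := fun n => ‖a n k‖ + ‖b n k‖ with hcdef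
  have hc : Summable c := hsum k hk
  have hcn : ∀ n, 0 ≤ c n := fun n => add_nonneg (norm_nonneg _) (norm_nonneg _)
  have hrpow : ∀ n : ℕ, r ^ n ≤ 1 := fun n =>
    pow_le_one₀ hr0 hr1.le
  -- the pointwise bound
  set g : ℕ → ℝ := fun n => if 1 ≤ n then c n * r ^ n else 0 with hgdef
  have hgn : ∀ n, 0 ≤ g n := by
    intro n
    simp only [hgdef]
    split
    · exact mul_nonneg (hcn n) (pow_nonneg hr0 n)
    · exact le_refl 0
  have hgle : ∀ n, g n ≤ c n := by
    intro n
    simp only [hgdef]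
    split
    · calc c n * r ^ n ≤ c n * 1 := mul_le_mul_of_nonneg_left (hrpow n) (hcn n)
        _ = c n := mul_one _
    · exact hcn n
  have hg : Summable g := hc.of_nonneg_of_le hgn hgle
  have hfb : ∀ n : ℕ, ‖(if 1 ≤ n then
      a n k * z ^ n + (starRingEnd ℂ) (b n k) * ((starRingEnd ℂ) z) ^ n else 0)‖ ≤ g n := by
    intro n
    simp only [hgdef]
    split
    · calc ‖a n k * z ^ n + (starRingEnd ℂ) (b n k) * ((starRingEnd ℂ) z) ^ n‖
          ≤ ‖a n k * z ^ n‖ + ‖(starRingEnd ℂ) (b n k) * ((starRingEnd ℂ) z) ^ n‖ :=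
            norm_add_le _ _
        _ = ‖a n k‖ * r ^ n + ‖b n k‖ * r ^ n := by
            simp [hrdef, map_pow]
        _ = c n * r ^ n := by ring
    · simp
  have hfs : Summable (fun n : ℕ => if 1 ≤ n then
      a n k * z ^ n + (starRingEnd ℂ) (b n k) * ((starRingEnd ℂ) z) ^ n else 0) :=
    Summable.of_norm (hg.of_nonneg_of_le (fun _ => norm_nonneg _) hfb)
  have h1 : ‖∑' n : ℕ, if 1 ≤ n then
      a n k * z ^ n + (starRingEnd ℂ) (b n k) * ((starRingEnd ℂ) z) ^ n else 0‖
      ≤ ∑' n, g n := by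
    calc ‖∑' n : ℕ, if 1 ≤ n then
        a n k * z ^ n + (starRingEnd ℂ) (b n k) * ((starRingEnd ℂ) z) ^ n else 0‖
        ≤ ∑' n : ℕ, ‖(if 1 ≤ n then
          a n k * z ^ n + (starRingEnd ℂ) (b n k) * ((starRingEnd ℂ) z) ^ n else 0)‖ :=
          norm_tsum_le_tsum_norm (hg.of_nonneg_of_le (fun _ => norm_nonneg _) hfb)
      _ ≤ ∑' n, g n := Summable.tsum_le_tsum hfb
          (hg.of_nonneg_of_le (fun _ => norm_nonneg _) hfb) hg
  -- split off the first two terms of g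
  have hsplit : ∑' n, g n = g 0 + g 1 + ∑' n, g (n + 2) := by
    have := Summable.sum_add_tsum_nat_add 2 hg
    rw [← this]
    simp [Finset.sum_range_succ]
  -- tail bound
  have hc2 : Summable (fun n => c (n + 2)) := (summable_nat_add_iff (f := c) 2).2 hc
  have htail1 : ∑' n, g (n + 2) ≤ r ^ 2 * ∑' n, c (n + 2) := by
    rw [← tsum_mul_left]
    apply Summable.tsum_le_tsum _ ((summable_nat_add_iff (f := g) 2).2 hg) (hc2.mul_left _)
    intro n
    simp only [hgdef, if_pos (by omega : 1 ≤ n + 2)]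
    calc c (n + 2) * r ^ (n + 2) = (c (n + 2) * r ^ n) * r ^ 2 := by ring
      _ ≤ (c (n + 2) * 1) * r ^ 2 := by
          apply mul_le_mul_of_nonneg_right _ (pow_nonneg hr0 2)
          exact mul_le_mul_of_nonneg_left (hrpow n) (hcn _)
      _ = r ^ 2 * c (n + 2) := by ring
  -- key coefficient bound
  set w : ℕ → ℝ := fun n => if 2 ≤ n then (2 * ((k : ℝ) - 1) + n * (lam * n + 1 - lam)) * c n else 0 with hwdef
  have hw : Summable w := hwsum k hk
  have hwn : ∀ n, 0 ≤ w n := by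
    intro n
    simp only [hwdef]
    split
    · rename_i h
      apply mul_nonneg _ (hcn n)
      have hk' : (1 : ℝ) ≤ (k : ℝ) := by exact_mod_cast hk1
      have hn' : (2 : ℝ) ≤ (n : ℝ) := by exact_mod_cast h
      nlinarith [mul_nonneg hlam0 (mul_nonneg (by linarith : (0:ℝ) ≤ (n:ℝ)) (by linarith : (0:ℝ) ≤ (n:ℝ))), mul_nonneg (by linarith : (0:ℝ) ≤ 1 - lam) (by linarith : (0:ℝ) ≤ (n:ℝ))]
    · exact le_refl 0
  have hkey : (2 * (1 + lam)) * ∑' n, c (n + 2) ≤ ∑' n, w n := by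
    rw [← tsum_mul_left]
    have hwtail : ∑' n, w n = ∑' n, w (n + 2) := by
      have := Summable.sum_add_tsum_nat_add 2 hw
      rw [← this]
      simp [Finset.sum_range_succ, hwdef]
    rw [hwtail]
    apply Summable.tsum_le_tsum _ (hc2.mul_left _) ((summable_nat_add_iff (f := w) 2).2 hw)
    intro n
    simp only [hwdef, if_pos (by omega : 2 ≤ n + 2)]
    apply mul_le_mul_of_nonneg_right _ (hcn _)
    have hk' : (1 : ℝ) ≤ (k : ℝ) := by exact_mod_cast hk1
    have hn' : (2 : ℝ) ≤ ((n + 2 : ℕ) : ℝ) := by exact_mod_cast Nat.le_add_left 2 n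
    nlinarith [mul_nonneg (mul_nonneg hlam0 (by linarith : (0:ℝ) ≤ ((n + 2 : ℕ) : ℝ) - 2)) (by linarith : (0:ℝ) ≤ ((n + 2 : ℕ) : ℝ) + 2), mul_nonneg (by linarith : (0:ℝ) ≤ 1 - lam) (by linarith : (0:ℝ) ≤ ((n + 2 : ℕ) : ℝ) - 2)]
  -- ∑' w ≤ total ≤ 2 - S
  have hwtot : ∑' n, w n ≤ ∑ k' ∈ Finset.Icc 1 p, ∑' n : ℕ,
      (if 2 ≤ n then (2 * ((k' : ℝ) - 1) + n * (lam * n + 1 - lam)) * (‖a n k'‖ + ‖b n k'‖) else 0) := by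
    apply Finset.single_le_sum (f := fun k' : ℕ => ∑' n : ℕ,
      (if 2 ≤ n then (2 * ((k' : ℝ) - 1) + n * (lam * n + 1 - lam)) * (‖a n k'‖ + ‖b n k'‖) else 0)) _ hk
    intro i hi
    exact tsum_nonneg (fun n => by
      split
      · rename_i h
        apply mul_nonneg _ (add_nonneg (norm_nonneg _) (norm_nonneg _))
        have hi1 : (1 : ℝ) ≤ (i : ℝ) := by exact_mod_cast (Finset.mem_Icc.mp hi).1
        have hn' : (2 : ℝ) ≤ (n : ℝ) := by exact_mod_cast h
        nlinarith [mul_nonneg hlam0 (mul_nonneg (by linarith : (0:ℝ) ≤ (n:ℝ)) (by linarith : (0:ℝ) ≤ (n:ℝ))), mul_nonneg (by linarith : (0:ℝ) ≤ 1 - lam) (by linarith : (0:ℝ) ≤ (n:ℝ))]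
      · exact le_refl 0)
  -- S ≥ 1 + |b 1 1|
  have hSlb : 1 + ‖b 1 1‖ ≤ ∑ k' ∈ Finset.Icc 1 p,
      (2 * (k' : ℝ) - 1) * (‖a 1 k'‖ + ‖b 1 k'‖) := by
    have h1mem : (1 : ℕ) ∈ Finset.Icc 1 p := Finset.mem_Icc.mpr ⟨le_refl 1, hp⟩
    calc 1 + ‖b 1 1‖
        = (2 * ((1 : ℕ) : ℝ) - 1) * (‖a 1 1‖ + ‖b 1 1‖) := by
          simp [ha11]
          ring
      _ ≤ _ := by
          apply Finset.single_le_sum (f := fun k' : ℕ => (2 * (k' : ℝ) - 1) *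
            (‖a 1 k'‖ + ‖b 1 k'‖)) _ h1mem
          intro i hi
          have hi1 : (1 : ℝ) ≤ (i : ℝ) := by exact_mod_cast (Finset.mem_Icc.mp hi).1
          apply mul_nonneg (by linarith)
            (add_nonneg (norm_nonneg _) (norm_nonneg _))
  have hpos : (0 : ℝ) < 2 * (1 + lam) := by linarith
  have htail2 : ∑' n, c (n + 2) ≤ (1 - ‖b 1 1‖) / (2 * (1 + lam)) := by
    rw [le_div_iff₀ hpos]
    calc (∑' n, c (n + 2)) * (2 * (1 + lam)) = (2 * (1 + lam)) * ∑' n, c (n + 2) := by ring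
      _ ≤ ∑' n, w n := hkey
      _ ≤ _ := hwtot
      _ ≤ 2 - ∑ k' ∈ Finset.Icc 1 p,
          (2 * (k' : ℝ) - 1) * (‖a 1 k'‖ + ‖b 1 k'‖) := hW
      _ ≤ 1 - ‖b 1 1‖ := by linarith
  -- finish
  have hg1 : g 1 = c 1 * r := by simp [hgdef]
  have hg0 : g 0 = 0 := by simp [hgdef]
  calc ‖∑' n : ℕ, if 1 ≤ n then
        a n k * z ^ n + (starRingEnd ℂ) (b n k) * ((starRingEnd ℂ) z) ^ n else 0‖
      ≤ ∑' n, g n := h1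
    _ = g 0 + g 1 + ∑' n, g (n + 2) := hsplit
    _ ≤ 0 + c 1 * r + r ^ 2 * ((1 - ‖b 1 1‖) / (2 * (1 + lam))) := by
        rw [hg0, hg1]
        gcongr
        calc ∑' n, g (n + 2) ≤ r ^ 2 * ∑' n, c (n + 2) := htail1
          _ ≤ r ^ 2 * ((1 - ‖b 1 1‖) / (2 * (1 + lam))) := by
              apply mul_le_mul_of_nonneg_left htail2 (pow_nonneg hr0 2)
    _ = c 1 * r + (1 - ‖b 1 1‖) / (2 * (1 + lam)) * r ^ 2 := by ring
end

section
/- Let p ≥ 1 be an integer and λ ∈ [0,1]. Let (t_i)_{i∈ℕ} be nonnegative reals with Σ_{i=0}^∞ t_i = 1, and for each i let F_i be a polyharmonic mapping of class HS_p(λ) with coefficients a^{(i)}_{n,k}, b^{(i)}_{n,k} (so a^{(i)}_{1,1} = 1). Then the series Σ_{i=0}^∞ t_i F_i(z) converges for each z ∈ 𝔻, the coefficients A_{n,k} = Σ_{i=0}^∞ t_i a^{(i)}_{n,k} and B_{n,k} = Σ_{i=0}^∞ t_i b^{(i)}_{n,k} converge absolutely with A_{1,1} = 1, the polyharmonic mapping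 with coefficients (A_{n,k}, B_{n,k}) equals z ↦ Σ_{i=0}^∞ t_i F_i(z) on 𝔻, and this mapping belongs to HS_p(λ). That is, the family HS_p(λ) is closed under (countable) convex combinations. -/
open Complex Metric Set

lemma weight_ge_two {lam : ℝ} (hlam : lam ∈ Set.Icc (0:ℝ) 1) {n k : ℕ} (hn : 2 ≤ n) (hk : 1 ≤ k) :
    (2 : ℝ) ≤ 2 * ((k : ℝ) - 1) + n * (lam * n + 1 - lam) := by
  obtain ⟨h0, h1⟩ := hlam
  have hn' : (2:ℝ) ≤ n := by exact_mod_cast hn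
  have hk' : (1:ℝ) ≤ k := by exact_mod_cast hk
  have key : (2:ℝ) ≤ (n:ℝ) * (lam * n + 1 - lam) := by nlinarith [sq_nonneg ((n:ℝ) - 2)]
  nlinarith

section Aux
variable {p : ℕ} {lam : ℝ} {a b : ℕ → ℕ → ℂ}

lemma wterm_nonneg (hlam : lam ∈ Set.Icc (0:ℝ) 1) {k : ℕ} (hk : 1 ≤ k) (n : ℕ) :
    (0:ℝ) ≤ if 2 ≤ n then (2 * ((k : ℝ) - 1) + n * (lam * n + 1 - lam)) *
      (‖a n k‖ + ‖b n k‖) else 0 := by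
  split_ifs with h
  · exact mul_nonneg (le_trans (by norm_num) (weight_ge_two hlam h hk)) (by positivity)
  · exact le_refl _

lemma c_nonneg_terms (k : ℕ) :
    (0:ℝ) ≤ (2 * (k : ℝ) - 1) * (‖a 1 k‖ + ‖b 1 k‖) ∨ True := Or.inr trivial

/-- For each k in range, the weighted tail sum is at most 1. -/
lemma wf_tsum_le (h : HSLam p lam a b) (hlam : lam ∈ Set.Icc (0:ℝ) 1)
    {k : ℕ} (hk : k ∈ Finset.Icc 1 p) :
    (∑' n : ℕ, if 2 ≤ n then (2 * ((k : ℝ) - 1) + n * (lam * n + 1 - lam)) *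
      (‖a n k‖ + ‖b n k‖) else 0) ≤ 1 := by
  have h1 := h.2.2.2.1
  have h2 := h.2.2.2.2.1
  have hle : (∑' n : ℕ, if 2 ≤ n then (2 * ((k : ℝ) - 1) + n * (lam * n + 1 - lam)) *
      (‖a n k‖ + ‖b n k‖) else 0)
      ≤ ∑ k' ∈ Finset.Icc 1 p, ∑' n : ℕ,
      (if 2 ≤ n then (2 * ((k' : ℝ) - 1) + n * (lam * n + 1 - lam)) *
        (‖a n k'‖ + ‖b n k'‖) else 0) := by
    refine Finset.single_le_sum (f := fun (k' : ℕ) => ∑' n : ℕ,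
      (if 2 ≤ n then (2 * ((k' : ℝ) - 1) + n * (lam * n + 1 - lam)) *
        (‖a n k'‖ + ‖b n k'‖) else 0))
      (fun k' hk' => tsum_nonneg fun n =>
      wterm_nonneg hlam (Finset.mem_Icc.1 hk').1 n) hk
  linarith

/-- each coefficient pair sum is at most 2 -/
lemma s_le_two (h : HSLam p lam a b) (hlam : lam ∈ Set.Icc (0:ℝ) 1)
    {k n : ℕ} (hk : k ∈ Finset.Icc 1 p) (hn : 1 ≤ n) :
    ‖a n k‖ + ‖b n k‖ ≤ 2 := by
  obtain ⟨hk1, hkp⟩ := Finset.mem_Icc.1 hk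
  rcases eq_or_lt_of_le hn with h1 | h2
  · -- n = 1
    have hc : (2 * (k : ℝ) - 1) * (‖a 1 k‖ + ‖b 1 k‖)
        ≤ ∑ k' ∈ Finset.Icc 1 p,
        (2 * (k' : ℝ) - 1) * (‖a 1 k'‖ + ‖b 1 k'‖) := by
      refine Finset.single_le_sum (f := fun (k' : ℕ) => (2 * (k' : ℝ) - 1) *
        (‖a 1 k'‖ + ‖b 1 k'‖)) (fun k' hk' => ?_) hk
      have : (1:ℝ) ≤ k' := by exact_mod_cast (Finset.mem_Icc.1 hk').1
      have : (0:ℝ) ≤ 2 * (k' : ℝ) - 1 := by linarith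
      positivity
    have hk' : (1:ℝ) ≤ 2 * (k:ℝ) - 1 := by
      have : (1:ℝ) ≤ k := by exact_mod_cast hk1
      linarith
    have hs : (0:ℝ) ≤ ‖a 1 k‖ + ‖b 1 k‖ := by positivity
    have := h.2.2.2.2.2
    subst h1
    nlinarith
  · -- n ≥ 2
    have hn2 : 2 ≤ n := h2
    have hterm : (2 * ((k : ℝ) - 1) + n * (lam * n + 1 - lam)) *
        (‖a n k‖ + ‖b n k‖)
        ≤ ∑' m : ℕ, if 2 ≤ m then (2 * ((k : ℝ) - 1) + m * (lam * m + 1 - lam)) *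
          (‖a m k‖ + ‖b m k‖) else 0 := by
      have := Summable.le_tsum (h.2.2.1 k hk) n (fun m _ => wterm_nonneg hlam hk1 m)
      simpa [hn2] using this
    have hw := weight_ge_two hlam hn2 hk1
    have htail := wf_tsum_le h hlam hk
    have hs : (0:ℝ) ≤ ‖a n k‖ + ‖b n k‖ := by positivity
    nlinarith
end Aux

section Aux2
variable {p : ℕ} {lam : ℝ} {a b : ℕ → ℕ → ℂ}

lemma ind_summable (h : HSLam p lam a b) {k : ℕ} (hk : k ∈ Finset.Icc 1 p) :
    Summable (fun n : ℕ => if 1 ≤ n then ‖a n k‖ + ‖b n k‖ else 0) := by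
  refine Summable.of_nonneg_of_le (fun n => ?_) (fun n => ?_) (h.2.1 k hk)
  · split_ifs; · positivity
    · exact le_refl _
  · split_ifs; · exact le_refl _
    · positivity

lemma ind_tsum_le_three (h : HSLam p lam a b) (hlam : lam ∈ Set.Icc (0:ℝ) 1)
    {k : ℕ} (hk : k ∈ Finset.Icc 1 p) :
    (∑' n : ℕ, if 1 ≤ n then ‖a n k‖ + ‖b n k‖ else 0) ≤ 3 := by
  obtain ⟨hk1, hkp⟩ := Finset.mem_Icc.1 hk
  set wf : ℕ → ℝ := fun n => if 2 ≤ n then (2 * ((k : ℝ) - 1) + n * (lam * n + 1 - lam)) *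
      (‖a n k‖ + ‖b n k‖) else 0 with hwf
  have hsum1 : Summable (fun n : ℕ => if n = 1 then (2:ℝ) else 0) :=
    summable_of_ne_finset_zero (s := {1}) (by intro n hn; simp at hn; simp [hn])
  have hsum2 : Summable (fun n => wf n * (1/2)) := (h.2.2.1 k hk).mul_right _
  have hle : ∀ n : ℕ, (if 1 ≤ n then ‖a n k‖ + ‖b n k‖ else 0)
      ≤ (if n = 1 then (2:ℝ) else 0) + wf n * (1/2) := by
    intro n
    match n, hwf with
    | 0, _ => simp [wf]
    | 1, _ =>
      have := s_le_two h hlam hk (le_refl 1)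
      simp only [hwf]
      norm_num
      exact this
    | (m+2), _ =>
      have hn2 : 2 ≤ m + 2 := by omega
      have hw := weight_ge_two (k := k) (n := m + 2) hlam hn2 hk1
      have hs : (0:ℝ) ≤ ‖a (m+2) k‖ + ‖b (m+2) k‖ := by positivity
      simp only [hwf, hn2, if_pos, show (1:ℕ) ≤ m + 2 by omega, show ¬(m+2 = 1) by omega, if_false]
      nlinarith
  calc (∑' n : ℕ, if 1 ≤ n then ‖a n k‖ + ‖b n k‖ else 0)
      ≤ ∑' n : ℕ, ((if n = 1 then (2:ℝ) else 0) + wf n * (1/2)) :=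
        Summable.tsum_le_tsum hle (ind_summable h hk) (hsum1.add hsum2)
    _ = 2 + (∑' n, wf n) * (1/2) := by
        rw [Summable.tsum_add hsum1 hsum2, tsum_ite_eq 1 (fun _ => (2:ℝ)), tsum_mul_right]
    _ ≤ 3 := by
        have := wf_tsum_le h hlam hk
        have h0 : (0:ℝ) ≤ ∑' n, wf n := tsum_nonneg (wterm_nonneg hlam hk1)
        linarith

lemma inner_abs_le (h : HSLam p lam a b) (hlam : lam ∈ Set.Icc (0:ℝ) 1)
    {k : ℕ} (hk : k ∈ Finset.Icc 1 p) {z : ℂ} (hz : ‖z‖ ≤ 1) :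
    ‖∑' n : ℕ, if 1 ≤ n then
      a n k * z ^ n + (starRingEnd ℂ) (b n k) * ((starRingEnd ℂ) z) ^ n else 0‖ ≤ 3 := by
  have hptw : ∀ n : ℕ, ‖(if 1 ≤ n then
      a n k * z ^ n + (starRingEnd ℂ) (b n k) * ((starRingEnd ℂ) z) ^ n else 0)‖
      ≤ (if 1 ≤ n then ‖a n k‖ + ‖b n k‖ else 0) := by
    intro n
    split_ifs with hn
    · have hzn : ‖z‖ ^ n ≤ 1 := pow_le_one₀ (norm_nonneg z) hz
      calc ‖a n k * z ^ n + (starRingEnd ℂ) (b n k) * ((starRingEnd ℂ) z) ^ n‖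
          ≤ ‖a n k * z ^ n‖ + ‖(starRingEnd ℂ) (b n k) * ((starRingEnd ℂ) z) ^ n‖ :=
            norm_add_le _ _
        _ = ‖a n k‖ * ‖z‖ ^ n
            + ‖b n k‖ * ‖z‖ ^ n := by
            simp [map_mul, map_pow]
        _ ≤ ‖a n k‖ + ‖b n k‖ := by
            have h1 : (0:ℝ) ≤ ‖a n k‖ := norm_nonneg _
            have h2 : (0:ℝ) ≤ ‖b n k‖ := norm_nonneg _
            nlinarith
    · simp
  have hns : Summable (fun n : ℕ => ‖(if 1 ≤ n then
      a n k * z ^ n + (starRingEnd ℂ) (b n k) * ((starRingEnd ℂ) z) ^ n else 0)‖) :=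
    Summable.of_nonneg_of_le (fun n => norm_nonneg _) hptw (ind_summable h hk)
  calc ‖∑' n : ℕ, if 1 ≤ n then
        a n k * z ^ n + (starRingEnd ℂ) (b n k) * ((starRingEnd ℂ) z) ^ n else 0‖
      ≤ ∑' n : ℕ, ‖(if 1 ≤ n then
        a n k * z ^ n + (starRingEnd ℂ) (b n k) * ((starRingEnd ℂ) z) ^ n else 0)‖ :=
        norm_tsum_le_tsum_norm hns
    _ ≤ ∑' n : ℕ, (if 1 ≤ n then ‖a n k‖ + ‖b n k‖ else 0) :=
        Summable.tsum_le_tsum hptw hns (ind_summable h hk)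
    _ ≤ 3 := ind_tsum_le_three h hlam hk

lemma polyF_abs_le (h : HSLam p lam a b) (hlam : lam ∈ Set.Icc (0:ℝ) 1)
    {z : ℂ} (hz : ‖z‖ ≤ 1) :
    ‖polyF p a b z‖ ≤ 3 * p := by
  calc ‖polyF p a b z‖
      ≤ ∑ k ∈ Finset.Icc 1 p, ‖((‖z‖ : ℂ)) ^ (2 * (k - 1)) *
        ∑' n : ℕ, if 1 ≤ n then
          a n k * z ^ n + (starRingEnd ℂ) (b n k) * ((starRingEnd ℂ) z) ^ n else 0‖ := by
        simpa only [polyF] using norm_sum_le (Finset.Icc 1 p)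
          (fun k => ((‖z‖ : ℂ)) ^ (2 * (k - 1)) *
          ∑' n : ℕ, if 1 ≤ n then
            a n k * z ^ n + (starRingEnd ℂ) (b n k) * ((starRingEnd ℂ) z) ^ n else 0)
    _ ≤ ∑ k ∈ Finset.Icc 1 p, (3:ℝ) := by
        refine Finset.sum_le_sum fun k hk => ?_
        rw [norm_mul, norm_pow, Complex.norm_of_nonneg (norm_nonneg z)]
        have h1 : ‖z‖ ^ (2 * (k - 1)) ≤ 1 := pow_le_one₀ (norm_nonneg z) hz
        have h2 := inner_abs_le h hlam hk hz
        have h3 : (0:ℝ) ≤ ‖∑' n : ℕ, if 1 ≤ n then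
          a n k * z ^ n + (starRingEnd ℂ) (b n k) * ((starRingEnd ℂ) z) ^ n else 0‖ :=
          norm_nonneg _
        nlinarith [pow_nonneg (norm_nonneg z) (2 * (k-1))]
    _ = 3 * p := by simp [Nat.card_Icc]; ring

end Aux2

lemma term_abs_le {z : ℂ} (hz : ‖z‖ ≤ 1) (a b : ℂ) (n : ℕ) :
    ‖(if 1 ≤ n then a * z ^ n + (starRingEnd ℂ) b * ((starRingEnd ℂ) z) ^ n else 0)‖
      ≤ (if 1 ≤ n then ‖a‖ + ‖b‖ else 0) := by
  split_ifs with hn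
  · have hzn : ‖z‖ ^ n ≤ 1 := pow_le_one₀ (norm_nonneg z) hz
    calc ‖a * z ^ n + (starRingEnd ℂ) b * ((starRingEnd ℂ) z) ^ n‖
        ≤ ‖a * z ^ n‖ + ‖(starRingEnd ℂ) b * ((starRingEnd ℂ) z) ^ n‖ := norm_add_le _ _
      _ = ‖a‖ * ‖z‖ ^ n + ‖b‖ * ‖z‖ ^ n := by
          simp [map_mul, map_pow]
      _ ≤ ‖a‖ + ‖b‖ := by
          have h1 : (0:ℝ) ≤ ‖a‖ := norm_nonneg _
          have h2 : (0:ℝ) ≤ ‖b‖ := norm_nonneg _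
          nlinarith
  · simp

set_option maxHeartbeats 1000000 in
/-- The family `HS_p(λ)` is closed under countable convex combinations. -/
theorem closed_under_convex_combinations
    (p : ℕ) (hp : 1 ≤ p) (lam : ℝ) (hlam : lam ∈ Set.Icc (0 : ℝ) 1)
    (t : ℕ → ℝ) (ht : ∀ i, 0 ≤ t i) (htsum : HasSum t 1)
    (aa bb : ℕ → ℕ → ℕ → ℂ) (hF : ∀ i, HSLam p lam (aa i) (bb i)) :
    (∀ z ∈ Metric.ball (0 : ℂ) 1,
      Summable (fun i : ℕ => (t i : ℂ) * polyF p (aa i) (bb i) z)) ∧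
    (∀ n k : ℕ, 1 ≤ n → 1 ≤ k → k ≤ p →
      Summable (fun i : ℕ => ‖(t i : ℂ) * aa i n k‖) ∧
      Summable (fun i : ℕ => ‖(t i : ℂ) * bb i n k‖)) ∧
    (∑' i : ℕ, (t i : ℂ) * aa i 1 1) = 1 ∧
    (∀ z ∈ Metric.ball (0 : ℂ) 1,
      polyF p (fun n k => ∑' i : ℕ, (t i : ℂ) * aa i n k)
        (fun n k => ∑' i : ℕ, (t i : ℂ) * bb i n k) z
        = ∑' i : ℕ, (t i : ℂ) * polyF p (aa i) (bb i) z) ∧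
    HSLam p lam (fun n k => ∑' i : ℕ, (t i : ℂ) * aa i n k)
      (fun n k => ∑' i : ℕ, (t i : ℂ) * bb i n k) := by
  have habs : ∀ (i : ℕ) (c : ℂ), ‖(t i : ℂ) * c‖ = t i * ‖c‖ := by
    intro i c
    rw [norm_mul, Complex.norm_of_nonneg (ht i)]
  -- summability of (t i : ℂ) * c i for uniformly bounded c
  have hsco : ∀ (c : ℕ → ℂ), (∀ i, ‖c i‖ ≤ 2) →
      Summable (fun i => (t i : ℂ) * c i) := by
    intro c hc
    refine Summable.of_norm (Summable.of_nonneg_of_le (fun i => norm_nonneg _)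
      (fun i => ?_) (htsum.summable.mul_right 2))
    rw [habs]
    exact mul_le_mul_of_nonneg_left (hc i) (ht i)
  -- shorthand: coefficient size sums
  set S : ℕ → ℕ → ℕ → ℝ :=
    fun i n k => ‖aa i n k‖ + ‖bb i n k‖ with hSdef
  have hS2 : ∀ i, ∀ k ∈ Finset.Icc 1 p, ∀ n, 1 ≤ n → S i n k ≤ 2 :=
    fun i k hk n hn => s_le_two (hF i) hlam hk hn
  have hSnn : ∀ i n k, 0 ≤ S i n k := fun i n k => by positivity
  -- part 1
  have part1 : ∀ z ∈ Metric.ball (0 : ℂ) 1,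
      Summable (fun i : ℕ => (t i : ℂ) * polyF p (aa i) (bb i) z) := by
    intro z hz
    have hzle : ‖z‖ ≤ 1 := le_of_lt (by simpa using mem_ball_zero_iff.1 hz)
    refine Summable.of_norm (Summable.of_nonneg_of_le (fun i => norm_nonneg _)
      (fun i => ?_) (htsum.summable.mul_right (3 * (p:ℝ))))
    rw [habs]
    exact mul_le_mul_of_nonneg_left (polyF_abs_le (hF i) hlam hzle) (ht i)
  -- part 2
  have part2 : ∀ n k : ℕ, 1 ≤ n → 1 ≤ k → k ≤ p →
      Summable (fun i : ℕ => ‖(t i : ℂ) * aa i n k‖) ∧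
      Summable (fun i : ℕ => ‖(t i : ℂ) * bb i n k‖) := by
    intro n k hn hk1 hkp
    have hk : k ∈ Finset.Icc 1 p := Finset.mem_Icc.2 ⟨hk1, hkp⟩
    constructor
    · refine Summable.of_nonneg_of_le (fun i => norm_nonneg _)
        (fun i => ?_) (htsum.summable.mul_right 2)
      rw [habs]
      refine mul_le_mul_of_nonneg_left ?_ (ht i)
      have := hS2 i k hk n hn
      have := norm_nonneg (bb i n k)
      simp only [hSdef] at *
      linarith
    · refine Summable.of_nonneg_of_le (fun i => norm_nonneg _)
        (fun i => ?_) (htsum.summable.mul_right 2)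
      rw [habs]
      refine mul_le_mul_of_nonneg_left ?_ (ht i)
      have := hS2 i k hk n hn
      have := norm_nonneg (aa i n k)
      simp only [hSdef] at *
      linarith
  -- part 3
  have part3 : (∑' i : ℕ, (t i : ℂ) * aa i 1 1) = 1 := by
    have he : ∀ i, (t i : ℂ) * aa i 1 1 = ((t i : ℝ) : ℂ) := by
      intro i; rw [(hF i).1, mul_one]
    rw [tsum_congr he]
    have := (Complex.ofRealCLM.hasSum htsum).tsum_eq
    simpa using this
  -- product summability (unweighted), for k in range
  have hprod1 : ∀ k ∈ Finset.Icc 1 p, Summable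
      (fun q : ℕ × ℕ => t q.1 * (if 1 ≤ q.2 then S q.1 q.2 k else 0)) := by
    intro k hk
    refine (summable_prod_of_nonneg fun q => ?_).2 ⟨fun i => ?_, ?_⟩
    · dsimp only
      split_ifs
      · exact mul_nonneg (ht q.1) (hSnn _ _ _)
      · simp
    · exact ((ind_summable (hF i) hk).mul_left (t i))
    · refine Summable.of_nonneg_of_le (fun i => tsum_nonneg fun n => ?_)
        (fun i => ?_) (htsum.summable.mul_right 3)
      · dsimp only; split_ifs
        · exact mul_nonneg (ht i) (hSnn _ _ _)
        · simp
      · calc (∑' n : ℕ, t i * (if 1 ≤ n then S i n k else 0))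
            = t i * ∑' n : ℕ, (if 1 ≤ n then S i n k else 0) := tsum_mul_left
          _ ≤ t i * 3 := mul_le_mul_of_nonneg_left (ind_tsum_le_three (hF i) hlam hk) (ht i)
  -- product summability (weighted)
  have hprod2 : ∀ k ∈ Finset.Icc 1 p, Summable
      (fun q : ℕ × ℕ => t q.1 * (if 2 ≤ q.2 then
        (2 * ((k : ℝ) - 1) + q.2 * (lam * q.2 + 1 - lam)) * S q.1 q.2 k else 0)) := by
    intro k hk
    have hk1 := (Finset.mem_Icc.1 hk).1
    refine (summable_prod_of_nonneg fun q => ?_).2 ⟨fun i => ?_, ?_⟩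
    · exact mul_nonneg (ht q.1) (wterm_nonneg hlam hk1 q.2)
    · exact ((hF i).2.2.1 k hk).mul_left (t i)
    · refine Summable.of_nonneg_of_le
        (fun i => tsum_nonneg fun n => mul_nonneg (ht i) (wterm_nonneg hlam hk1 n))
        (fun i => ?_) (htsum.summable.mul_right 1)
      calc (∑' n : ℕ, t i * (if 2 ≤ n then
              (2 * ((k : ℝ) - 1) + n * (lam * n + 1 - lam)) * S i n k else 0))
          = t i * ∑' n : ℕ, (if 2 ≤ n then
              (2 * ((k : ℝ) - 1) + n * (lam * n + 1 - lam)) * S i n k else 0) := tsum_mul_left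
        _ ≤ t i * 1 := mul_le_mul_of_nonneg_left (wf_tsum_le (hF i) hlam hk) (ht i)
  -- abbreviations for the averaged coefficients
  set AA : ℕ → ℕ → ℂ := fun n k => ∑' i : ℕ, (t i : ℂ) * aa i n k with hAAdef
  set BB : ℕ → ℕ → ℂ := fun n k => ∑' i : ℕ, (t i : ℂ) * bb i n k with hBBdef
  -- summability of t i * S i n k
  have hsum_tS : ∀ k ∈ Finset.Icc 1 p, ∀ n, 1 ≤ n →
      Summable fun i => t i * S i n k := by
    intro k hk n hn
    refine Summable.of_nonneg_of_le (fun i => mul_nonneg (ht i) (hSnn _ _ _))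
      (fun i => ?_) (htsum.summable.mul_right 2)
    exact mul_le_mul_of_nonneg_left (hS2 i k hk n hn) (ht i)
  -- the key coefficient bound
  have hAB : ∀ k ∈ Finset.Icc 1 p, ∀ n, 1 ≤ n →
      ‖AA n k‖ + ‖BB n k‖ ≤ ∑' i, t i * S i n k := by
    intro k hk n hn
    obtain ⟨hk1, hkp⟩ := Finset.mem_Icc.1 hk
    have hpa : Summable fun i => t i * ‖aa i n k‖ :=
      ((part2 n k hn hk1 hkp).1).congr fun i => habs i _
    have hpb : Summable fun i => t i * ‖bb i n k‖ :=
      ((part2 n k hn hk1 hkp).2).congr fun i => habs i _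
    have hna : ‖AA n k‖ ≤ ∑' i, t i * ‖aa i n k‖ := by
      have h0 : Summable fun i => ‖(t i : ℂ) * aa i n k‖ := by
        exact (part2 n k hn hk1 hkp).1
      have h1 := norm_tsum_le_tsum_norm h0
      calc ‖AA n k‖ = ‖∑' i, (t i : ℂ) * aa i n k‖ := rfl
        _ ≤ ∑' i, ‖(t i : ℂ) * aa i n k‖ := h1
        _ = ∑' i, t i * ‖aa i n k‖ := tsum_congr fun i => habs i _
    have hnb : ‖BB n k‖ ≤ ∑' i, t i * ‖bb i n k‖ := by
      have h0 : Summable fun i => ‖(t i : ℂ) * bb i n k‖ := by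
        exact (part2 n k hn hk1 hkp).2
      have h1 := norm_tsum_le_tsum_norm h0
      calc ‖BB n k‖ = ‖∑' i, (t i : ℂ) * bb i n k‖ := rfl
        _ ≤ ∑' i, ‖(t i : ℂ) * bb i n k‖ := h1
        _ = ∑' i, t i * ‖bb i n k‖ := tsum_congr fun i => habs i _
    have hadd : (∑' i, t i * ‖aa i n k‖) + (∑' i, t i * ‖bb i n k‖)
        = ∑' i, t i * S i n k := by
      rw [← Summable.tsum_add hpa hpb]
      exact tsum_congr fun i => by simp only [hSdef]; ring
    linarith
  -- marginal summabilities
  have hQ1sum : ∀ k ∈ Finset.Icc 1 p,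
      Summable fun n => ∑' i, t i * (if 1 ≤ n then S i n k else 0) := by
    intro k hk
    have h := (hprod1 k hk).prod_symm
    have hnn : ∀ q : ℕ × ℕ, 0 ≤ t q.2 * (if 1 ≤ q.1 then S q.2 q.1 k else 0) := by
      intro q; split_ifs
      · exact mul_nonneg (ht _) (hSnn _ _ _)
      · simp
    exact ((summable_prod_of_nonneg hnn).1 h).2
  have hQ2sum : ∀ k ∈ Finset.Icc 1 p,
      Summable fun n => ∑' i, t i * (if 2 ≤ n then
        (2 * ((k : ℝ) - 1) + n * (lam * n + 1 - lam)) * S i n k else 0) := by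
    intro k hk
    have hk1 := (Finset.mem_Icc.1 hk).1
    have h := (hprod2 k hk).prod_symm
    have hnn : ∀ q : ℕ × ℕ, 0 ≤ t q.2 * (if 2 ≤ q.1 then
        (2 * ((k : ℝ) - 1) + q.1 * (lam * q.1 + 1 - lam)) * S q.2 q.1 k else 0) := by
      intro q; exact mul_nonneg (ht _) (wterm_nonneg hlam hk1 q.1)
    exact ((summable_prod_of_nonneg hnn).1 h).2
  -- component (ii) : coefficient summability of the average
  have hii : ∀ k ∈ Finset.Icc 1 p,
      Summable fun n : ℕ => ‖AA n k‖ + ‖BB n k‖ := by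
    intro k hk
    refine (summable_nat_add_iff 1).1 ?_
    refine Summable.of_nonneg_of_le (fun n => by positivity) (fun n => ?_)
      ((summable_nat_add_iff 1).2 (hQ1sum k hk))
    have h1 : (1:ℕ) ≤ n + 1 := Nat.succ_le_succ (Nat.zero_le n)
    calc ‖AA (n+1) k‖ + ‖BB (n+1) k‖
        ≤ ∑' i, t i * S i (n+1) k := hAB k hk (n+1) h1
      _ = ∑' i, t i * (if 1 ≤ n + 1 then S i (n+1) k else 0) := by
          simp only [if_pos h1]
  -- pointwise bound for the weighted terms
  have hwT_le : ∀ k ∈ Finset.Icc 1 p, ∀ n : ℕ,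
      (if 2 ≤ n then (2 * ((k : ℝ) - 1) + n * (lam * n + 1 - lam)) *
        (‖AA n k‖ + ‖BB n k‖) else 0)
      ≤ ∑' i, t i * (if 2 ≤ n then
        (2 * ((k : ℝ) - 1) + n * (lam * n + 1 - lam)) * S i n k else 0) := by
    intro k hk n
    have hk1 := (Finset.mem_Icc.1 hk).1
    split_ifs with hn
    · have hw : (0:ℝ) ≤ 2 * ((k : ℝ) - 1) + n * (lam * n + 1 - lam) :=
        le_trans (by norm_num) (weight_ge_two hlam hn hk1)
      calc (2 * ((k : ℝ) - 1) + n * (lam * n + 1 - lam)) *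
            (‖AA n k‖ + ‖BB n k‖)
          ≤ (2 * ((k : ℝ) - 1) + n * (lam * n + 1 - lam)) * ∑' i, t i * S i n k :=
            mul_le_mul_of_nonneg_left (hAB k hk n (le_trans (by norm_num) hn)) hw
        _ = ∑' i, t i * ((2 * ((k : ℝ) - 1) + n * (lam * n + 1 - lam)) * S i n k) := by
            rw [← tsum_mul_left]
            exact tsum_congr fun i => by ring
    · exact tsum_nonneg fun i => by simp
  -- component (iii)
  have hiii : ∀ k ∈ Finset.Icc 1 p,
      Summable fun n : ℕ => (if 2 ≤ n then
        (2 * ((k : ℝ) - 1) + n * (lam * n + 1 - lam)) *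
        (‖AA n k‖ + ‖BB n k‖) else 0) := by
    intro k hk
    have hk1 := (Finset.mem_Icc.1 hk).1
    refine Summable.of_nonneg_of_le (fun n => ?_) (hwT_le k hk) (hQ2sum k hk)
    split_ifs with hn
    · exact mul_nonneg (le_trans (by norm_num) (weight_ge_two hlam hn hk1)) (by positivity)
    · exact le_refl _
  -- the per-i tail sums
  set Ww : ℕ → ℕ → ℝ := fun i k => ∑' n : ℕ, (if 2 ≤ n then
      (2 * ((k : ℝ) - 1) + n * (lam * n + 1 - lam)) * S i n k else 0) with hWwdef
  set c : ℕ → ℝ := fun i => ∑ k ∈ Finset.Icc 1 p, (2 * (k : ℝ) - 1) * S i 1 k with hcdef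
  set W : ℕ → ℝ := fun i => ∑ k ∈ Finset.Icc 1 p, Ww i k with hWdef
  have hWw_nonneg : ∀ i, ∀ k ∈ Finset.Icc 1 p, 0 ≤ Ww i k := by
    intro i k hk
    exact tsum_nonneg (wterm_nonneg hlam (Finset.mem_Icc.1 hk).1)
  have hWw_le_one : ∀ i, ∀ k ∈ Finset.Icc 1 p, Ww i k ≤ 1 :=
    fun i k hk => wf_tsum_le (hF i) hlam hk
  have hc1 : ∀ i, 1 ≤ c i := fun i => (hF i).2.2.2.2.1
  have hc2 : ∀ i, c i < 2 := fun i => (hF i).2.2.2.2.2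
  have hW_le : ∀ i, W i ≤ 2 - c i := fun i => (hF i).2.2.2.1
  have hW_nonneg : ∀ i, 0 ≤ W i :=
    fun i => Finset.sum_nonneg fun k hk => hWw_nonneg i k hk
  have hsum_tW : ∀ k ∈ Finset.Icc 1 p, Summable fun i => t i * Ww i k := by
    intro k hk
    refine Summable.of_nonneg_of_le (fun i => mul_nonneg (ht i) (hWw_nonneg i k hk))
      (fun i => ?_) htsum.summable
    calc t i * Ww i k ≤ t i * 1 :=
          mul_le_mul_of_nonneg_left (hWw_le_one i k hk) (ht i)
      _ = t i := mul_one _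
  -- step 1
  have st1 : ∀ k ∈ Finset.Icc 1 p,
      (∑' n : ℕ, (if 2 ≤ n then (2 * ((k : ℝ) - 1) + n * (lam * n + 1 - lam)) *
        (‖AA n k‖ + ‖BB n k‖) else 0))
      ≤ ∑' i, t i * Ww i k := by
    intro k hk
    calc (∑' n : ℕ, (if 2 ≤ n then (2 * ((k : ℝ) - 1) + n * (lam * n + 1 - lam)) *
          (‖AA n k‖ + ‖BB n k‖) else 0))
        ≤ ∑' n, ∑' i, t i * (if 2 ≤ n then
          (2 * ((k : ℝ) - 1) + n * (lam * n + 1 - lam)) * S i n k else 0) :=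
          Summable.tsum_le_tsum (hwT_le k hk) (hiii k hk) (hQ2sum k hk)
      _ = ∑' i, ∑' n, t i * (if 2 ≤ n then
          (2 * ((k : ℝ) - 1) + n * (lam * n + 1 - lam)) * S i n k else 0) :=
          Summable.tsum_comm (hprod2 k hk)
      _ = ∑' i, t i * Ww i k := tsum_congr fun i => tsum_mul_left
  -- step 2
  have st2 : ∑ k ∈ Finset.Icc 1 p, ∑' i, t i * Ww i k = ∑' i, t i * W i := by
    rw [← Summable.tsum_finsetSum (fun k hk => hsum_tW k hk)]
    exact tsum_congr fun i => (Finset.mul_sum _ _ _).symm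
  have hsumW : Summable fun i => t i * W i := by
    refine Summable.of_nonneg_of_le (fun i => mul_nonneg (ht i) (hW_nonneg i))
      (fun i => ?_) htsum.summable
    calc t i * W i ≤ t i * 1 := by
          refine mul_le_mul_of_nonneg_left ?_ (ht i)
          have := hW_le i; have := hc1 i; linarith
      _ = t i := mul_one _
  have hsumtc : Summable fun i => t i * c i := by
    refine Summable.of_nonneg_of_le
      (fun i => mul_nonneg (ht i) (le_trans zero_le_one (hc1 i)))
      (fun i => ?_) (htsum.summable.mul_right 2)
    exact mul_le_mul_of_nonneg_left (le_of_lt (hc2 i)) (ht i)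
  -- steps 3 and 4
  have st34 : ∑' i, t i * W i ≤ 2 - ∑' i, t i * c i := by
    have hle : ∀ i, t i * W i ≤ t i * 2 - t i * c i := by
      intro i
      have h1 : t i * W i ≤ t i * (2 - c i) :=
        mul_le_mul_of_nonneg_left (hW_le i) (ht i)
      nlinarith [h1]
    calc ∑' i, t i * W i ≤ ∑' i, (t i * 2 - t i * c i) :=
          Summable.tsum_le_tsum hle hsumW ((htsum.summable.mul_right 2).sub hsumtc)
      _ = (∑' i, t i * 2) - ∑' i, t i * c i :=
          Summable.tsum_sub (htsum.summable.mul_right 2) hsumtc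
      _ = 2 - ∑' i, t i * c i := by rw [tsum_mul_right, htsum.tsum_eq]; ring
  -- step 5
  have st5 : ∑ k ∈ Finset.Icc 1 p,
      (2 * (k : ℝ) - 1) * (‖AA 1 k‖ + ‖BB 1 k‖)
      ≤ ∑' i, t i * c i := by
    have hsumk : ∀ k ∈ Finset.Icc 1 p,
        Summable fun i => (2 * (k : ℝ) - 1) * (t i * S i 1 k) :=
      fun k hk => (hsum_tS k hk 1 le_rfl).mul_left _
    have hper : ∀ k ∈ Finset.Icc 1 p,
        (2 * (k : ℝ) - 1) * (‖AA 1 k‖ + ‖BB 1 k‖)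
        ≤ ∑' i, (2 * (k : ℝ) - 1) * (t i * S i 1 k) := by
      intro k hk
      have hk1 : (1:ℝ) ≤ (k:ℝ) := by exact_mod_cast (Finset.mem_Icc.1 hk).1
      have h1 : (0:ℝ) ≤ 2 * (k : ℝ) - 1 := by linarith
      calc (2 * (k : ℝ) - 1) * (‖AA 1 k‖ + ‖BB 1 k‖)
          ≤ (2 * (k : ℝ) - 1) * ∑' i, t i * S i 1 k :=
            mul_le_mul_of_nonneg_left (hAB k hk 1 le_rfl) h1
        _ = ∑' i, (2 * (k : ℝ) - 1) * (t i * S i 1 k) := tsum_mul_left.symm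
    calc ∑ k ∈ Finset.Icc 1 p,
        (2 * (k : ℝ) - 1) * (‖AA 1 k‖ + ‖BB 1 k‖)
        ≤ ∑ k ∈ Finset.Icc 1 p, ∑' i, (2 * (k : ℝ) - 1) * (t i * S i 1 k) :=
          Finset.sum_le_sum hper
      _ = ∑' i, ∑ k ∈ Finset.Icc 1 p, (2 * (k : ℝ) - 1) * (t i * S i 1 k) :=
          (Summable.tsum_finsetSum hsumk).symm
      _ = ∑' i, t i * c i := by
          refine tsum_congr fun i => ?_
          rw [hcdef, Finset.mul_sum]
          exact Finset.sum_congr rfl fun k _ => by ring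
  -- strictness
  have htc_lt : ∑' i, t i * c i < 2 := by
    obtain ⟨i0, hi0⟩ : ∃ i, 0 < t i := by
      by_contra hcon
      push_neg at hcon
      have hz : ∀ i, t i = 0 := fun i => le_antisymm (hcon i) (ht i)
      have : (1:ℝ) = 0 := htsum.unique (by simpa [funext hz] using hasSum_zero)
      norm_num at this
    have hsub : Summable fun i => t i * 2 - t i * c i :=
      (htsum.summable.mul_right 2).sub hsumtc
    have hpos : 0 < ∑' i, (t i * 2 - t i * c i) := by
      refine lt_of_lt_of_le ?_ (Summable.le_tsum hsub i0 fun j _ => ?_)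
      · nlinarith [hc2 i0]
      · nlinarith [hc2 j, hc1 j, ht j]
    have heq : ∑' i, (t i * 2 - t i * c i) = 2 - ∑' i, t i * c i := by
      rw [Summable.tsum_sub (htsum.summable.mul_right 2) hsumtc, tsum_mul_right, htsum.tsum_eq]
      ring
    linarith [heq ▸ hpos]
  -- component (iv)
  have hiv : ∑ k ∈ Finset.Icc 1 p,
      (∑' n : ℕ, (if 2 ≤ n then (2 * ((k : ℝ) - 1) + n * (lam * n + 1 - lam)) *
        (‖AA n k‖ + ‖BB n k‖) else 0))
      ≤ 2 - ∑ k ∈ Finset.Icc 1 p,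
        (2 * (k : ℝ) - 1) * (‖AA 1 k‖ + ‖BB 1 k‖) := by
    calc ∑ k ∈ Finset.Icc 1 p,
        (∑' n : ℕ, (if 2 ≤ n then (2 * ((k : ℝ) - 1) + n * (lam * n + 1 - lam)) *
          (‖AA n k‖ + ‖BB n k‖) else 0))
        ≤ ∑ k ∈ Finset.Icc 1 p, ∑' i, t i * Ww i k := Finset.sum_le_sum st1
      _ = ∑' i, t i * W i := st2
      _ ≤ 2 - ∑' i, t i * c i := st34
      _ ≤ 2 - ∑ k ∈ Finset.Icc 1 p,
          (2 * (k : ℝ) - 1) * (‖AA 1 k‖ + ‖BB 1 k‖) := by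
          linarith [st5]
  -- component (v)
  have hv : 1 ≤ ∑ k ∈ Finset.Icc 1 p,
      (2 * (k : ℝ) - 1) * (‖AA 1 k‖ + ‖BB 1 k‖) := by
    have h1mem : 1 ∈ Finset.Icc 1 p := Finset.mem_Icc.2 ⟨le_rfl, hp⟩
    have hterm := Finset.single_le_sum
      (f := fun k : ℕ => (2 * (k : ℝ) - 1) * (‖AA 1 k‖ + ‖BB 1 k‖))
      (fun k hk => by
        have hk1 : (1:ℝ) ≤ (k:ℝ) := by exact_mod_cast (Finset.mem_Icc.1 hk).1
        have : (0:ℝ) ≤ 2 * (k : ℝ) - 1 := by linarith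
        positivity) h1mem
    have hA11 : ‖AA 1 1‖ = 1 := by
      have : AA 1 1 = 1 := part3
      rw [this]; simp
    have hB11 : 0 ≤ ‖BB 1 1‖ := norm_nonneg _
    simp only [Nat.cast_one] at hterm
    nlinarith [hterm]
  -- component (vi)
  have hvi : ∑ k ∈ Finset.Icc 1 p,
      (2 * (k : ℝ) - 1) * (‖AA 1 k‖ + ‖BB 1 k‖) < 2 :=
    lt_of_le_of_lt st5 htc_lt
  -- part 4
  have part4 : ∀ z ∈ Metric.ball (0 : ℂ) 1,
      polyF p AA BB z = ∑' i : ℕ, (t i : ℂ) * polyF p (aa i) (bb i) z := by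
    intro z hz
    have hzle : ‖z‖ ≤ 1 := le_of_lt (by simpa using mem_ball_zero_iff.1 hz)
    have hGle : ∀ i, ∀ k ∈ Finset.Icc 1 p, ‖∑' n : ℕ, (if 1 ≤ n then
        aa i n k * z ^ n + (starRingEnd ℂ) (bb i n k) * ((starRingEnd ℂ) z) ^ n else 0)‖ ≤ 3 :=
      fun i k hk => inner_abs_le (hF i) hlam hk hzle
    have hg : ∀ k ∈ Finset.Icc 1 p, Summable (fun q : ℕ × ℕ => (t q.1 : ℂ) *
        (if 1 ≤ q.2 then aa q.1 q.2 k * z ^ q.2 +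
          (starRingEnd ℂ) (bb q.1 q.2 k) * ((starRingEnd ℂ) z) ^ q.2 else 0)) := by
      intro k hk
      refine Summable.of_norm (Summable.of_nonneg_of_le (fun q => norm_nonneg _)
        (fun q => ?_) (hprod1 k hk))
      rw [norm_mul, Complex.norm_of_nonneg (ht q.1)]
      exact mul_le_mul_of_nonneg_left (term_abs_le hzle _ _ _) (ht q.1)
    have claim1 : ∀ k ∈ Finset.Icc 1 p, ∀ n : ℕ,
        (if 1 ≤ n then AA n k * z ^ n +
          (starRingEnd ℂ) (BB n k) * ((starRingEnd ℂ) z) ^ n else 0)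
        = ∑' i, (t i : ℂ) * (if 1 ≤ n then aa i n k * z ^ n +
            (starRingEnd ℂ) (bb i n k) * ((starRingEnd ℂ) z) ^ n else 0) := by
      intro k hk n
      by_cases hn : 1 ≤ n
      · simp only [if_pos hn]
        have hsa : Summable fun i => (t i : ℂ) * aa i n k := by
          apply hsco; intro i
          have := hS2 i k hk n hn
          have := norm_nonneg (bb i n k)
          simp only [hSdef] at *; linarith
        have hsb : Summable fun i => (t i : ℂ) * (starRingEnd ℂ) (bb i n k) := by
          apply hsco; intro i
          rw [Complex.norm_conj]
          have := hS2 i k hk n hn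
          have := norm_nonneg (aa i n k)
          simp only [hSdef] at *; linarith
        have e1 : AA n k * z ^ n = ∑' i, (t i : ℂ) * aa i n k * z ^ n :=
          tsum_mul_right.symm
        have e2 : (starRingEnd ℂ) (BB n k)
            = ∑' i, (t i : ℂ) * (starRingEnd ℂ) (bb i n k) := by
          calc (starRingEnd ℂ) (BB n k)
              = ∑' i, (starRingEnd ℂ) ((t i : ℂ) * bb i n k) := tsum_star
            _ = ∑' i, (t i : ℂ) * (starRingEnd ℂ) (bb i n k) :=
                tsum_congr fun i => by rw [map_mul, Complex.conj_ofReal]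
        have e3 : (starRingEnd ℂ) (BB n k) * ((starRingEnd ℂ) z) ^ n
            = ∑' i, (t i : ℂ) * (starRingEnd ℂ) (bb i n k) * ((starRingEnd ℂ) z) ^ n := by
          rw [e2]; exact tsum_mul_right.symm
        have h1 : Summable fun i => (t i : ℂ) * aa i n k * z ^ n := hsa.mul_right _
        have h2 : Summable fun i =>
            (t i : ℂ) * (starRingEnd ℂ) (bb i n k) * ((starRingEnd ℂ) z) ^ n :=
          hsb.mul_right _
        rw [e1, e3, ← Summable.tsum_add h1 h2]
        exact tsum_congr fun i => by ring
      · simp only [if_neg hn]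
        simp
    have key : ∀ k ∈ Finset.Icc 1 p,
        (∑' n : ℕ, (if 1 ≤ n then AA n k * z ^ n +
          (starRingEnd ℂ) (BB n k) * ((starRingEnd ℂ) z) ^ n else 0))
        = ∑' i, (t i : ℂ) * (∑' n : ℕ, (if 1 ≤ n then aa i n k * z ^ n +
          (starRingEnd ℂ) (bb i n k) * ((starRingEnd ℂ) z) ^ n else 0)) := by
      intro k hk
      calc (∑' n : ℕ, (if 1 ≤ n then AA n k * z ^ n +
            (starRingEnd ℂ) (BB n k) * ((starRingEnd ℂ) z) ^ n else 0))
          = ∑' n, ∑' i, (t i : ℂ) * (if 1 ≤ n then aa i n k * z ^ n +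
            (starRingEnd ℂ) (bb i n k) * ((starRingEnd ℂ) z) ^ n else 0) :=
            tsum_congr (claim1 k hk)
        _ = ∑' i, ∑' n, (t i : ℂ) * (if 1 ≤ n then aa i n k * z ^ n +
            (starRingEnd ℂ) (bb i n k) * ((starRingEnd ℂ) z) ^ n else 0) :=
            Summable.tsum_comm (hg k hk)
        _ = ∑' i, (t i : ℂ) * (∑' n : ℕ, (if 1 ≤ n then aa i n k * z ^ n +
            (starRingEnd ℂ) (bb i n k) * ((starRingEnd ℂ) z) ^ n else 0)) :=
            tsum_congr fun i => tsum_mul_left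
    have hc_abs : ∀ k : ℕ, ‖((‖z‖ : ℂ)) ^ (2 * (k - 1))‖ ≤ 1 := by
      intro k
      rw [norm_pow, Complex.norm_of_nonneg (norm_nonneg z)]
      exact pow_le_one₀ (norm_nonneg z) hzle
    have hsk : ∀ k ∈ Finset.Icc 1 p, Summable fun i => (t i : ℂ) *
        (((‖z‖ : ℂ)) ^ (2 * (k - 1)) * ∑' n : ℕ, (if 1 ≤ n then aa i n k * z ^ n +
          (starRingEnd ℂ) (bb i n k) * ((starRingEnd ℂ) z) ^ n else 0)) := by
      intro k hk
      refine Summable.of_norm (Summable.of_nonneg_of_le (fun i => norm_nonneg _)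
        (fun i => ?_) (htsum.summable.mul_right 3))
      rw [norm_mul, norm_mul, Complex.norm_of_nonneg (ht i)]
      refine mul_le_mul_of_nonneg_left ?_ (ht i)
      have h1 := hc_abs k
      have h2 := hGle i k hk
      have h3 : (0:ℝ) ≤ ‖((‖z‖ : ℂ)) ^ (2 * (k - 1))‖ :=
        norm_nonneg _
      have h4 : (0:ℝ) ≤ ‖∑' n : ℕ, (if 1 ≤ n then aa i n k * z ^ n +
          (starRingEnd ℂ) (bb i n k) * ((starRingEnd ℂ) z) ^ n else 0)‖ :=
        norm_nonneg _
      nlinarith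
    calc polyF p AA BB z
        = ∑ k ∈ Finset.Icc 1 p, ((‖z‖ : ℂ)) ^ (2 * (k - 1)) *
          ∑' i, (t i : ℂ) * (∑' n : ℕ, (if 1 ≤ n then aa i n k * z ^ n +
          (starRingEnd ℂ) (bb i n k) * ((starRingEnd ℂ) z) ^ n else 0)) := by
          simp only [polyF]
          exact Finset.sum_congr rfl fun k hk => by rw [key k hk]
      _ = ∑ k ∈ Finset.Icc 1 p, ∑' i, (t i : ℂ) *
          (((‖z‖ : ℂ)) ^ (2 * (k - 1)) * ∑' n : ℕ, (if 1 ≤ n then aa i n k * z ^ n +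
          (starRingEnd ℂ) (bb i n k) * ((starRingEnd ℂ) z) ^ n else 0)) := by
          refine Finset.sum_congr rfl fun k hk => ?_
          rw [← tsum_mul_left]
          exact tsum_congr fun i => by ring
      _ = ∑' i, ∑ k ∈ Finset.Icc 1 p, (t i : ℂ) *
          (((‖z‖ : ℂ)) ^ (2 * (k - 1)) * ∑' n : ℕ, (if 1 ≤ n then aa i n k * z ^ n +
          (starRingEnd ℂ) (bb i n k) * ((starRingEnd ℂ) z) ^ n else 0)) :=
          (Summable.tsum_finsetSum fun k hk => hsk k hk).symm
      _ = ∑' i : ℕ, (t i : ℂ) * polyF p (aa i) (bb i) z := by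
          refine tsum_congr fun i => ?_
          simp only [polyF]
          rw [Finset.mul_sum]
  exact ⟨part1, part2, part3, part4, part3, hii, hiii, hiv, hv, hvi⟩
end
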